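/- arXiv:1603.03002 — 6 statements merged into one kernel-verified Lean document; each statement's English description precedes it below -/
import Mathlib

section
/- Let R₁, R₂ ⊆ F be subsets of the free group F of rank m ≥ 2 such that 1 ∉ R₁, |uv| = |u| + |v| for all u ∈ R₁ and v ∈ R₂ (all products are reduced), and the multiplication map (u,v) ↦ uv is injective on R₁ × R₂. Let R = {uv : u ∈ R₁, v ∈ R₂}. Then for all real t ∈ (−1,1): g_R(t) = g_{R₁}(t) · g*_{R₂}(t). -/
open Filter Set

noncomputable section

/-- The free group of rank `m`. -/
abbrev FG (m : ℕ) := FreeGroup (Fin m)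

/-- The length of the reduced word of `g`. -/
def glen {m : ℕ} (g : FG m) : ℕ := (FreeGroup.toWord g).length

/-- The cardinality of the sphere of radius `k` in the free group of rank `m`,
as a real number: `1` if `k = 0` and `2m(2m-1)^(k-1)` otherwise. -/
def sphereCard (m k : ℕ) : ℝ :=
  if k = 0 then 1 else 2 * (m : ℝ) * (2 * (m : ℝ) - 1) ^ (k - 1)

/-- `n_k(R)`: the number of elements of length `k` in `R`. -/
def nk {m : ℕ} (R : Set (FG m)) (k : ℕ) : ℕ := {g ∈ R | glen g = k}.ncard

/-- `f_k(R) = n_k(R) / |S_k|`: the frequency of elements of `R` among words of length `k`. -/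
def fk {m : ℕ} (R : Set (FG m)) (k : ℕ) : ℝ := (nk R k : ℝ) / sphereCard m k

/-- The frequency generating function `g_R(t) = ∑ f_k(R) t^k`. -/
def genFun {m : ℕ} (R : Set (FG m)) (t : ℝ) : ℝ := ∑' k : ℕ, fk R k * t ^ k

/-- The adjusted generating function `g*_R(t) = ∑ n_k(R) (t/(2m-1))^k`. -/
def genFunStar {m : ℕ} (R : Set (FG m)) (t : ℝ) : ℝ :=
  ∑' k : ℕ, (nk R k : ℝ) * (t / (2 * (m : ℝ) - 1)) ^ k

/-- `R` is thick: `lim_{t→1⁻} (1-t)·g_R(t)` exists and is positive. -/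
def IsThick {m : ℕ} (R : Set (FG m)) : Prop :=
  ∃ c : ℝ, 0 < c ∧
    Tendsto (fun t => (1 - t) * genFun R t) (nhdsWithin 1 (Set.Iio 1)) (nhds c)

/-- `R` is exponentially negligible (exponentially λ-measurable): there is `δ ∈ (0,1)`
with `f_k(R) < δ^k` for all sufficiently large `k`. -/
def ExpNegligible {m : ℕ} (R : Set (FG m)) : Prop :=
  ∃ δ : ℝ, 0 < δ ∧ δ < 1 ∧ ∀ᶠ k : ℕ in atTop, fk R k < δ ^ k

/-- `R ⊆ F` is a regular set if the language of reduced words of its elements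
(over the alphabet `Σ = X ∪ X⁻¹`, encoded as `Fin m × Bool`) is a regular language. -/
def IsRegularSet {m : ℕ} (R : Set (FG m)) : Prop :=
  Language.IsRegular {w : List (Fin m × Bool) | ∃ g ∈ R, FreeGroup.toWord g = w}

/-- The cone `C(w) = { wf : |wf| = |w| + |f| }`. -/
def cone {m : ℕ} (w : FG m) : Set (FG m) :=
  {g | ∃ f, g = w * f ∧ glen g = glen w + glen f}

/-- The right cone `C[w] = { fw : |fw| = |f| + |w| }`. -/
def coneR {m : ℕ} (w : FG m) : Set (FG m) :=
  {g | ∃ f, g = f * w ∧ glen g = glen f + glen w}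

/-- The double-based cone `C(u,v) = { ufv : |ufv| = |u| + |f| + |v| }`. -/
def dcone {m : ℕ} (u v : FG m) : Set (FG m) :=
  {g | ∃ f, g = u * f * v ∧ glen g = glen u + glen f + glen v}

/-- The prefix closure of `R`. -/
def prefixClosure {m : ℕ} (R : Set (FG m)) : Set (FG m) :=
  {p | ∃ g ∈ R, ∃ s, g = p * s ∧ glen g = glen p + glen s}

/-- A finite deterministic partial automaton over the alphabet
`Σ = X ∪ X⁻¹` (encoded as `Fin m × Bool`), with one initial and one final state. -/
structure PAut (m : ℕ) where
  n : ℕ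
  step : Fin n → Fin m × Bool → Option (Fin n)
  start : Fin n
  accept : Fin n

namespace PAut

variable {m : ℕ}

/-- Run the automaton from state `s` on the word `w`. -/
def evalFrom (A : PAut m) : Fin A.n → List (Fin m × Bool) → Option (Fin A.n)
  | s, [] => some s
  | s, a :: w =>
    match A.step s a with
    | none => none
    | some s' => A.evalFrom s' w

/-- The set of words accepted by `A`. -/
def words (A : PAut m) : Set (List (Fin m × Bool)) :=
  {w | A.evalFrom A.start w = some A.accept}

/-- The language of `A`, identified with a subset of the free group. -/
def lang (A : PAut m) : Set (FG m) :=
  (fun w => FreeGroup.mk w) '' A.words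

/-- Conditions (c)–(f) of a special automaton:
(c) every state is reachable from the initial state;
(d) the final state is reachable from every state;
(e) all transitions entering a given state carry the same label (the type of the state);
(f) if a state has type `x`, no transition labeled `x⁻¹` leaves it. -/
def CoreSpecial (A : PAut m) : Prop :=
  (∀ s, ∃ w, A.evalFrom A.start w = some s) ∧
  (∀ s, ∃ w, A.evalFrom s w = some A.accept) ∧
  (∀ s₁ a₁ s₂ a₂ s, A.step s₁ a₁ = some s → A.step s₂ a₂ = some s → a₁ = a₂) ∧
  (∀ s' a s, A.step s' a = some s → A.step s (a.1, !a.2) = none)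

/-- A special automaton over the free group: conditions (a)–(f), with distinct
initial and final states and no transition entering the initial state. -/
def IsSpecial (A : PAut m) : Prop :=
  A.start ≠ A.accept ∧ (∀ s a, A.step s a ≠ some A.start) ∧ A.CoreSpecial

/-- A special monoid automaton: conditions (c)–(f), with the initial state equal to
the final state. -/
def IsSpecialMonoidAut (A : PAut m) : Prop :=
  A.start = A.accept ∧ A.CoreSpecial

/-- `A` is `Σ`-complete: every state `s` has a type `x` and for every label
`y ≠ x⁻¹` the transition `δ(s,y)` is defined. -/
def SigmaComplete (A : PAut m) : Prop :=
  ∀ s, ∃ a, (∃ s', A.step s' a = some s) ∧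
    ∀ b, b ≠ (a.1, !a.2) → (A.step s b).isSome

end PAut

/-- A special monoid: the language of a special monoid automaton. -/
def IsSpecialMonoid {m : ℕ} (M : Set (FG m)) : Prop :=
  ∃ A : PAut m, A.IsSpecialMonoidAut ∧ M = A.lang

/-- A thick monoid: the language of a `Σ`-complete special monoid automaton. -/
def IsThickMonoid {m : ℕ} (M : Set (FG m)) : Prop :=
  ∃ A : PAut m, A.IsSpecialMonoidAut ∧ A.SigmaComplete ∧ M = A.lang


namespace Stmt3Aux

variable {m : ℕ}

/-- Natural-number version of the sphere cardinality bound. -/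
def Nc (m k : ℕ) : ℕ := if k = 0 then 1 else 2 * m * (2 * m - 1) ^ (k - 1)

lemma glen_eq_zero {g : FG m} (h : glen g = 0) : g = 1 :=
  FreeGroup.toWord_eq_nil_iff.mp (List.length_eq_zero_iff.mp h)

lemma chain'_of_no_pattern : ∀ (L : List (Fin m × Bool)),
    (∀ (L₂ : List (Fin m × Bool)) (x : Fin m) (b : Bool) (L₃ : List (Fin m × Bool)),
      L ≠ L₂ ++ (x, b) :: (x, !b) :: L₃) →
    L.Chain' (fun a b => b ≠ (a.1, !a.2))
  | [], _ => List.isChain_nil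
  | [a], _ => List.isChain_singleton a
  | a :: c :: L, h => by
    rw [List.Chain', List.isChain_cons_cons]
    refine ⟨fun hc => ?_, chain'_of_no_pattern (c :: L)
      (fun L₂ x b L₃ hL => h (a :: L₂) x b L₃ (by rw [List.cons_append, hL]))⟩
    exact h [] a.1 a.2 L (by rw [hc]; simp)

lemma chain'_toWord (g : FG m) :
    (FreeGroup.toWord g).Chain' (fun a b => b ≠ (a.1, !a.2)) := by
  apply chain'_of_no_pattern
  intro L₂ x b L₃ hL
  exact FreeGroup.reduce.not (L₁ := FreeGroup.toWord g) (L₂ := L₂) (L₃ := L₃) (p := False)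
    (by rw [FreeGroup.reduce_toWord]; exact hL)

lemma Wset_finite (m k : ℕ) :
    {l : List (Fin m × Bool) | l.length = k ∧ l.Chain' (fun a b => b ≠ (a.1, !a.2))}.Finite :=
  (List.finite_length_eq (Fin m × Bool) k).subset fun _ hl => hl.1

/-- The finset of reduced words of length `k`. -/
def W (m k : ℕ) : Finset (List (Fin m × Bool)) := (Wset_finite m k).toFinset

lemma mem_W {k : ℕ} {l : List (Fin m × Bool)} :
    l ∈ W m k ↔ l.length = k ∧ l.Chain' (fun a b => b ≠ (a.1, !a.2)) := by
  simp [W, Set.Finite.mem_toFinset]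

lemma inv_eq_iff (a y : Fin m × Bool) : y = (a.1, !a.2) ↔ a = (y.1, !y.2) := by
  rcases a with ⟨a1, a2⟩; rcases y with ⟨y1, y2⟩
  simp only [Prod.mk.injEq, Prod.ext_iff]
  constructor
  · rintro ⟨rfl, rfl⟩; simp
  · rintro ⟨rfl, rfl⟩; simp

lemma card_filter_le (t : List (Fin m × Bool)) :
    (Finset.univ.filter (fun a : Fin m × Bool => ∀ y ∈ t.head?, y ≠ (a.1, !a.2))).card
      ≤ 2 * m := by
  calc (Finset.univ.filter (fun a : Fin m × Bool => ∀ y ∈ t.head?, y ≠ (a.1, !a.2))).card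
      ≤ (Finset.univ : Finset (Fin m × Bool)).card := Finset.card_filter_le _ _
    _ = 2 * m := by simp [Finset.card_univ, Nat.mul_comm]

lemma card_filter_eq (y : Fin m × Bool) (t : List (Fin m × Bool)) :
    (Finset.univ.filter
        (fun a : Fin m × Bool => ∀ z ∈ (y :: t).head?, z ≠ (a.1, !a.2))).card
      = 2 * m - 1 := by
  have : (Finset.univ.filter
        (fun a : Fin m × Bool => ∀ z ∈ (y :: t).head?, z ≠ (a.1, !a.2)))
      = Finset.univ.erase (y.1, !y.2) := by
    rw [← Finset.filter_ne']
    apply Finset.filter_congr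
    intro a _
    simp only [List.head?_cons, Option.mem_some_iff, ne_eq]
    constructor
    · intro h h2
      exact h y rfl ((inv_eq_iff a y).mpr h2)
    · intro h z hz h2
      exact h ((inv_eq_iff a y).mp (hz.trans h2))
  rw [this, Finset.card_erase_of_mem (Finset.mem_univ _)]
  simp [Finset.card_univ, Nat.mul_comm]

lemma card_W_le (m : ℕ) : ∀ k, (W m k).card ≤ Nc m k := by
  intro k
  induction k with
  | zero =>
    have : W m 0 ⊆ {[]} := by
      intro l hl
      rw [mem_W] at hl
      simp [List.length_eq_zero_iff.mp hl.1]
    simpa [Nc] using Finset.card_le_card this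
  | succ k ih =>
    have hsub : W m (k + 1) ⊆ (W m k).biUnion (fun t =>
        ((Finset.univ.filter (fun a : Fin m × Bool => ∀ y ∈ t.head?, y ≠ (a.1, !a.2))).image
          (· :: t))) := by
      intro l hl
      rw [mem_W] at hl
      obtain ⟨hlen, hch⟩ := hl
      cases l with
      | nil => simp at hlen
      | cons a t =>
        rw [List.Chain', List.isChain_cons] at hch
        refine Finset.mem_biUnion.2 ⟨t, ?_, Finset.mem_image.2 ⟨a, ?_, rfl⟩⟩
        · rw [mem_W]; exact ⟨by simpa using hlen, hch.2⟩
        · simp only [Finset.mem_filter, Finset.mem_univ, true_and]; exact hch.1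
    have hcard := Finset.card_le_card hsub
    have hbi := Finset.card_biUnion_le (s := W m k) (t := fun t =>
        ((Finset.univ.filter (fun a : Fin m × Bool => ∀ y ∈ t.head?, y ≠ (a.1, !a.2))).image
          (· :: t)))
    rcases Nat.eq_zero_or_pos k with rfl | hk
    · -- k = 0 : bound 2m
      have : ∀ t ∈ W m 0,
          ((Finset.univ.filter (fun a : Fin m × Bool => ∀ y ∈ t.head?, y ≠ (a.1, !a.2))).image
            (· :: t)).card ≤ 2 * m := fun t _ =>
        le_trans (Finset.card_image_le) (card_filter_le t)
      calc (W m 1).card ≤ _ := hcard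
        _ ≤ _ := hbi
        _ ≤ (W m 0).card * (2 * m) := by
            simpa using Finset.sum_le_card_nsmul _ _ (2 * m) this
        _ ≤ 1 * (2 * m) := Nat.mul_le_mul_right _ (by simpa [Nc] using ih)
        _ ≤ Nc m 1 := by simp [Nc]
    · -- k ≥ 1 : bound 2m - 1
      have hb : ∀ t ∈ W m k,
          ((Finset.univ.filter (fun a : Fin m × Bool => ∀ y ∈ t.head?, y ≠ (a.1, !a.2))).image
            (· :: t)).card ≤ 2 * m - 1 := by
        intro t ht
        rw [mem_W] at ht
        cases t with
        | nil => exfalso; have := ht.1; simp at this; omega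
        | cons y t' =>
          exact le_trans Finset.card_image_le (le_of_eq (card_filter_eq y t'))
      calc (W m (k + 1)).card ≤ _ := hcard
        _ ≤ _ := hbi
        _ ≤ (W m k).card * (2 * m - 1) := by
            simpa using Finset.sum_le_card_nsmul _ _ (2 * m - 1) hb
        _ ≤ Nc m k * (2 * m - 1) := Nat.mul_le_mul_right _ ih
        _ = Nc m (k + 1) := by
            have h1 : k ≠ 0 := by omega
            simp only [Nc, if_neg h1, if_neg (Nat.succ_ne_zero k), Nat.add_sub_cancel]
            rw [mul_assoc, ← pow_succ]
            congr 2
            omega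

lemma slice_finite (R : Set (FG m)) (k : ℕ) : {g ∈ R | glen g = k}.Finite := by
  apply Set.Finite.subset (Set.Finite.preimage FreeGroup.toWord_injective.injOn
    (List.finite_length_eq (Fin m × Bool) k))
  intro g hg
  exact hg.2

/-- The finset of elements of `R` of length `k`. -/
def slice (R : Set (FG m)) (k : ℕ) : Finset (FG m) := (slice_finite R k).toFinset

lemma mem_slice {R : Set (FG m)} {k : ℕ} {g : FG m} :
    g ∈ slice R k ↔ g ∈ R ∧ glen g = k := by
  simp [slice, Set.Finite.mem_toFinset]

lemma nk_eq_card (R : Set (FG m)) (k : ℕ) : nk R k = (slice R k).card :=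
  Set.ncard_eq_toFinset_card _ (slice_finite R k)

lemma nk_le_Nc (R : Set (FG m)) (k : ℕ) : nk R k ≤ Nc m k := by
  rw [nk_eq_card]
  calc (slice R k).card ≤ (W m k).card :=
        Finset.card_le_card_of_injOn FreeGroup.toWord
          (fun g hg => mem_W.2 ⟨(mem_slice.mp hg).2, chain'_toWord g⟩)
          FreeGroup.toWord_injective.injOn
    _ ≤ Nc m k := card_W_le m k

end Stmt3Aux


namespace Stmt3Aux

lemma nk_prod {m : ℕ} (R₁ R₂ : Set (FG m))
    (hlen : ∀ u ∈ R₁, ∀ v ∈ R₂, glen (u * v) = glen u + glen v)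
    (hinj : ∀ u ∈ R₁, ∀ v ∈ R₂, ∀ u' ∈ R₁, ∀ v' ∈ R₂,
      u * v = u' * v' → u = u' ∧ v = v') (k : ℕ) :
    nk {g : FG m | ∃ u ∈ R₁, ∃ v ∈ R₂, g = u * v} k
      = ∑ ij ∈ Finset.HasAntidiagonal.antidiagonal k, nk R₁ ij.1 * nk R₂ ij.2 := by
  rw [nk_eq_card]
  have hslice : slice {g : FG m | ∃ u ∈ R₁, ∃ v ∈ R₂, g = u * v} k
      = (Finset.HasAntidiagonal.antidiagonal k).biUnion (fun ij =>
          ((slice R₁ ij.1) ×ˢ (slice R₂ ij.2)).image (fun p => p.1 * p.2)) := by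
    ext g
    constructor
    · intro hg
      obtain ⟨⟨u, hu, v, hv, rfl⟩, hk⟩ := mem_slice.mp hg
      exact Finset.mem_biUnion.2 ⟨(glen u, glen v),
        Finset.HasAntidiagonal.mem_antidiagonal.2 (by rw [← hlen u hu v hv]; exact hk),
        Finset.mem_image.2 ⟨(u, v),
          Finset.mem_product.2 ⟨mem_slice.2 ⟨hu, rfl⟩, mem_slice.2 ⟨hv, rfl⟩⟩, rfl⟩⟩
    · intro hg
      obtain ⟨ij, hij, hg⟩ := Finset.mem_biUnion.mp hg
      obtain ⟨⟨u, v⟩, huv, rfl⟩ := Finset.mem_image.mp hg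
      rw [Finset.mem_product] at huv
      obtain ⟨hu, hui⟩ := mem_slice.mp huv.1
      obtain ⟨hv, hvj⟩ := mem_slice.mp huv.2
      exact mem_slice.2 ⟨⟨u, hu, v, hv, rfl⟩,
        by rw [hlen u hu v hv, hui, hvj]; exact Finset.HasAntidiagonal.mem_antidiagonal.mp hij⟩
  have hdisj : ∀ ij ∈ Finset.HasAntidiagonal.antidiagonal k, ∀ ij' ∈ Finset.HasAntidiagonal.antidiagonal k, ij ≠ ij' →
      Disjoint (((slice R₁ ij.1) ×ˢ (slice R₂ ij.2)).image (fun p => p.1 * p.2))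
        (((slice R₁ ij'.1) ×ˢ (slice R₂ ij'.2)).image (fun p => p.1 * p.2)) := by
    intro ij _ ij' _ hne
    rw [Finset.disjoint_left]
    rintro g hg hg'
    obtain ⟨⟨u, v⟩, huv, rfl⟩ := Finset.mem_image.mp hg
    obtain ⟨⟨u', v'⟩, huv', heq⟩ := Finset.mem_image.mp hg'
    rw [Finset.mem_product] at huv huv'
    obtain ⟨hu, hui⟩ := mem_slice.mp huv.1
    obtain ⟨hv, hvj⟩ := mem_slice.mp huv.2
    obtain ⟨hu', hui'⟩ := mem_slice.mp huv'.1
    obtain ⟨hv', hvj'⟩ := mem_slice.mp huv'.2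
    obtain ⟨rfl, rfl⟩ := hinj u' hu' v' hv' u hu v hv heq
    exact hne (Prod.ext (by rw [← hui, ← hui']) (by rw [← hvj, ← hvj']))
  rw [hslice, Finset.card_biUnion hdisj]
  refine Finset.sum_congr rfl fun ij _ => ?_
  rw [Finset.card_image_of_injOn, Finset.card_product, nk_eq_card, nk_eq_card]
  rintro ⟨u, v⟩ huv ⟨u', v'⟩ huv' heq
  simp only [Finset.coe_product, Set.mem_prod, Finset.mem_coe] at huv huv'
  obtain ⟨hu, _⟩ := mem_slice.mp huv.1
  obtain ⟨hv, _⟩ := mem_slice.mp huv.2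
  obtain ⟨hu', _⟩ := mem_slice.mp huv'.1
  obtain ⟨hv', _⟩ := mem_slice.mp huv'.2
  obtain ⟨rfl, rfl⟩ := hinj u hu v hv u' hu' v' hv' heq
  rfl

end Stmt3Aux

open Stmt3Aux in
/-- multiplicativity of the generating function for an unambiguous
reduced product of two sets. -/
theorem stmt3 {m : ℕ} (hm : 2 ≤ m) (R₁ R₂ : Set (FG m))
    (h1 : (1 : FG m) ∉ R₁)
    (hlen : ∀ u ∈ R₁, ∀ v ∈ R₂, glen (u * v) = glen u + glen v)
    (hinj : ∀ u ∈ R₁, ∀ v ∈ R₂, ∀ u' ∈ R₁, ∀ v' ∈ R₂,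
      u * v = u' * v' → u = u' ∧ v = v') :
    ∀ t ∈ Set.Ioo (-1 : ℝ) 1,
      genFun {g : FG m | ∃ u ∈ R₁, ∃ v ∈ R₂, g = u * v} t
        = genFun R₁ t * genFunStar R₂ t := by
  intro t ht
  obtain ⟨ht1, ht2⟩ := ht
  have habs : |t| < 1 := abs_lt.2 ⟨ht1, ht2⟩
  have hm2 : (2 : ℝ) ≤ (m : ℝ) := by exact_mod_cast hm
  have hq0 : (0 : ℝ) < 2 * (m : ℝ) - 1 := by linarith
  have hq1 : (1 : ℝ) ≤ 2 * (m : ℝ) - 1 := by linarith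
  have hcast : ∀ k, ((Nc m k : ℕ) : ℝ) = sphereCard m k := by
    intro k
    unfold Nc sphereCard
    split
    · norm_num
    · push_cast [Nat.cast_sub (show 1 ≤ 2 * m by omega)]
      norm_num
  have hs_pos : ∀ k, 0 < sphereCard m k := by
    intro k
    unfold sphereCard
    split
    · norm_num
    · exact mul_pos (by linarith) (pow_pos hq0 _)
  have hnk_le : ∀ (S : Set (FG m)) (k : ℕ), (nk S k : ℝ) ≤ sphereCard m k := by
    intro S k
    rw [← hcast]
    exact_mod_cast nk_le_Nc S k
  have hfk_nonneg : ∀ (S : Set (FG m)) (k : ℕ), 0 ≤ fk S k := fun S k =>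
    div_nonneg (Nat.cast_nonneg _) (hs_pos k).le
  have hfk_le_one : ∀ (S : Set (FG m)) (k : ℕ), fk S k ≤ 1 := fun S k =>
    (div_le_one (hs_pos k)).2 (hnk_le S k)
  have hnk0 : nk R₁ 0 = 0 := by
    rw [nk_eq_card, Finset.card_eq_zero, Finset.eq_empty_iff_forall_notMem]
    intro g hg
    obtain ⟨hgR, hg0⟩ := mem_slice.mp hg
    exact h1 (glen_eq_zero hg0 ▸ hgR)
  -- summability of the two series
  have hsum_a : Summable (fun i => ‖fk R₁ i * t ^ i‖) := by
    refine Summable.of_nonneg_of_le (fun i => norm_nonneg _) (fun i => ?_)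
      (summable_geometric_of_lt_one (abs_nonneg t) habs)
    rw [norm_mul, norm_pow, Real.norm_eq_abs, Real.norm_eq_abs,
      abs_of_nonneg (hfk_nonneg R₁ i)]
    calc fk R₁ i * |t| ^ i ≤ 1 * |t| ^ i :=
          mul_le_mul_of_nonneg_right (hfk_le_one R₁ i) (pow_nonneg (abs_nonneg t) i)
      _ = |t| ^ i := one_mul _
  have hsum_b : Summable (fun j => ‖(nk R₂ j : ℝ) * (t / (2 * (m : ℝ) - 1)) ^ j‖) := by
    refine Summable.of_nonneg_of_le (fun j => norm_nonneg _) (fun j => ?_)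
      ((summable_geometric_of_lt_one (abs_nonneg t) habs).mul_left (2 * (m : ℝ)))
    rw [norm_mul, norm_pow, Real.norm_eq_abs, Real.norm_eq_abs, abs_div,
      abs_of_pos hq0, Nat.abs_cast]
    cases j with
    | zero =>
      simp only [pow_zero, mul_one]
      calc (nk R₂ 0 : ℝ) ≤ sphereCard m 0 := hnk_le R₂ 0
        _ = 1 := by unfold sphereCard; norm_num
        _ ≤ 2 * (m : ℝ) := by linarith
    | succ j' =>
      have hsj : sphereCard m (j' + 1) = 2 * (m : ℝ) * (2 * (m : ℝ) - 1) ^ j' := by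
        unfold sphereCard
        rw [if_neg (Nat.succ_ne_zero j'), Nat.add_sub_cancel]
      calc (nk R₂ (j' + 1) : ℝ) * (|t| / (2 * (m : ℝ) - 1)) ^ (j' + 1)
          ≤ (2 * (m : ℝ) * (2 * (m : ℝ) - 1) ^ j') * (|t| / (2 * (m : ℝ) - 1)) ^ (j' + 1) := by
            apply mul_le_mul_of_nonneg_right (le_of_le_of_eq (hnk_le R₂ (j' + 1)) hsj)
            positivity
        _ = 2 * (m : ℝ) * |t| ^ (j' + 1) *
              ((2 * (m : ℝ) - 1) ^ j' / (2 * (m : ℝ) - 1) ^ (j' + 1)) := by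
            rw [div_pow]; ring
        _ ≤ 2 * (m : ℝ) * |t| ^ (j' + 1) * 1 := by
            apply mul_le_mul_of_nonneg_left _ (by positivity)
            rw [div_le_one (pow_pos hq0 _)]
            exact pow_le_pow_right₀ hq1 (Nat.le_succ j')
        _ = 2 * (m : ℝ) * |t| ^ (j' + 1) := mul_one _
  -- the key pointwise identity
  have key : ∀ k, fk {g : FG m | ∃ u ∈ R₁, ∃ v ∈ R₂, g = u * v} k * t ^ k
      = ∑ kl ∈ Finset.HasAntidiagonal.antidiagonal k,
          (fk R₁ kl.1 * t ^ kl.1) * ((nk R₂ kl.2 : ℝ) * (t / (2 * (m : ℝ) - 1)) ^ kl.2) := by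
    intro k
    unfold fk
    rw [nk_prod R₁ R₂ hlen hinj k]
    push_cast
    rw [Finset.sum_div, Finset.sum_mul]
    refine Finset.sum_congr rfl fun kl hkl => ?_
    have hk := Finset.HasAntidiagonal.mem_antidiagonal.mp hkl
    rcases Nat.eq_zero_or_pos kl.1 with h0 | hpos
    · rw [h0]
      simp [hnk0]
    · have hsplit : sphereCard m k = sphereCard m kl.1 * (2 * (m : ℝ) - 1) ^ kl.2 := by
        unfold sphereCard
        rw [if_neg (by omega), if_neg (by omega)]
        have h2 : k - 1 = (kl.1 - 1) + kl.2 := by omega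
        rw [h2, pow_add]
        ring
      have hs1 : sphereCard m kl.1 ≠ 0 := ne_of_gt (hs_pos _)
      have hqj : (2 * (m : ℝ) - 1) ^ kl.2 ≠ 0 := pow_ne_zero _ (ne_of_gt hq0)
      have htk : t ^ k = t ^ kl.1 * t ^ kl.2 := by rw [← pow_add, hk]
      rw [hsplit, htk, div_pow]
      field_simp
  calc genFun {g : FG m | ∃ u ∈ R₁, ∃ v ∈ R₂, g = u * v} t
      = ∑' k, ∑ kl ∈ Finset.HasAntidiagonal.antidiagonal k,
          (fk R₁ kl.1 * t ^ kl.1) * ((nk R₂ kl.2 : ℝ) * (t / (2 * (m : ℝ) - 1)) ^ kl.2) := by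
        unfold genFun
        exact tsum_congr key
    _ = (∑' i, fk R₁ i * t ^ i) * (∑' j, (nk R₂ j : ℝ) * (t / (2 * (m : ℝ) - 1)) ^ j) :=
        (tsum_mul_tsum_eq_tsum_sum_antidiagonal_of_summable_norm hsum_a hsum_b).symm
    _ = genFun R₁ t * genFunStar R₂ t := rfl
end
end

section
/- Let L ⊆ F be a regular subset of the free group F of rank m ≥ 2. Then there exist finitely many pairwise disjoint subsets L₀, L₁, …, L_k of F with L = L₀ ∪ L₁ ∪ … ∪ L_k such that each L_i is either the language L(A) of some special automaton A over F, or a special monoid. -/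
open Filter Set

noncomputable section

/-! ### Auxiliary development for the proof of Statement 4 -/

namespace Stmt4Aux

open scoped Classical

variable {m : ℕ}

/-- The alphabet `Σ = X ∪ X⁻¹`. -/
abbrev Sym (m : ℕ) := Fin m × Bool

/-- `Ok t w`: the word `w` has no adjacent cancellation, and its first letter does not
cancel the "type" `t`. -/
def Ok : Option (Sym m) → List (Sym m) → Prop
  | _, [] => True
  | t, a :: w => t ≠ some (a.1, !a.2) ∧ Ok (some a) w

lemma ok_reduce : ∀ (w : List (Sym m)) (t : Option (Sym m)), Ok t w → FreeGroup.reduce w = w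
  | [], _, _ => rfl
  | [_], _, _ => rfl
  | a :: b :: w, _, h => by
    have hr : FreeGroup.reduce (b :: w) = b :: w := ok_reduce (b :: w) (some a) h.2
    have hne : ¬(a.1 = b.1 ∧ a.2 = !b.2) := by
      intro hc
      exact h.2.1 (by rw [Option.some_inj, Prod.ext_iff]; exact hc)
    rw [FreeGroup.reduce.cons, hr]
    simp [hne]

lemma reduce_ok : ∀ (w : List (Sym m)), FreeGroup.reduce w = w →
    ∀ t : Option (Sym m), (∀ a, w.head? = some a → t ≠ some (a.1, !a.2)) → Ok t w
  | [], _, _, _ => trivial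
  | a :: w, h, t, ht => by
    rcases hr : FreeGroup.reduce w with _ | ⟨b, w2⟩
    · rw [FreeGroup.reduce.cons, hr] at h
      obtain rfl : w = [] := by injection h.symm
      exact ⟨ht a rfl, trivial⟩
    · rw [FreeGroup.reduce.cons, hr] at h
      have h' : (if a.1 = b.1 ∧ a.2 = !b.2 then w2 else a :: b :: w2) = a :: w := h
      by_cases hc : a.1 = b.1 ∧ a.2 = !b.2
      · rw [if_pos hc] at h'
        exfalso
        have hle : (FreeGroup.reduce w).length ≤ w.length :=
          (FreeGroup.reduce.red (L := w)).length_le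
        rw [hr, h'] at hle
        simp at hle
      · rw [if_neg hc] at h'
        have hw : w = b :: w2 := by
          injection h' with h1 h2
          exact h2.symm
        have hred : FreeGroup.reduce w = w := hr.trans hw.symm
        refine ⟨ht a rfl, reduce_ok w hred (some a) ?_⟩
        intro c hcw
        have hcb : c = b := by
          rw [hw] at hcw
          injection hcw with h1
          exact h1.symm
        subst hcb
        intro hcon
        apply hc
        rw [Option.some_inj, Prod.ext_iff] at hcon
        exact hcon

/-- Generic partial-automaton evaluation over a state type `S`. -/
def geval {S : Type} (st : S → Sym m → Option S) : S → List (Sym m) → Option S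
  | s, [] => some s
  | s, a :: w =>
    match st s a with
    | none => none
    | some s' => geval st s' w

lemma geval_append {S : Type} (st : S → Sym m → Option S) :
    ∀ (u v : List (Sym m)) (s : S),
      geval st s (u ++ v) = (geval st s u).bind (fun x => geval st x v)
  | [], v, s => by simp [geval]
  | a :: u, v, s => by
    simp only [List.cons_append, geval]
    cases st s a with
    | none => rfl
    | some s' => exact geval_append st u v s'

/-- Package a finite partial automaton into a `PAut`. -/
def mkPAut (S : Type) [Fintype S] (st : S → Sym m → Option S) (s0 z0 : S) : PAut m where
  n := Fintype.card S
  step i a := (st ((Fintype.equivFin S).symm i) a).map (Fintype.equivFin S)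
  start := Fintype.equivFin S s0
  accept := Fintype.equivFin S z0

lemma mkPAut_evalFrom (S : Type) [Fintype S] (st : S → Sym m → Option S) (s0 z0 : S) :
    ∀ (w : List (Sym m)) (s : S),
      (mkPAut S st s0 z0).evalFrom (Fintype.equivFin S s) w
        = (geval st s w).map (Fintype.equivFin S)
  | [], s => rfl
  | a :: w, s => by
    have hstep : (mkPAut S st s0 z0).step (Fintype.equivFin S s) a
        = (st s a).map (Fintype.equivFin S) := by
      simp [mkPAut]
    simp only [PAut.evalFrom, geval, hstep]
    cases st s a with
    | none => rfl
    | some s' => exact mkPAut_evalFrom S st s0 z0 w s'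

lemma mkPAut_words (S : Type) [Fintype S] (st : S → Sym m → Option S) (s0 z0 : S) :
    (mkPAut S st s0 z0).words = {w | geval st s0 w = some z0} := by
  ext w
  have hstart : (mkPAut S st s0 z0).start = Fintype.equivFin S s0 := rfl
  have haccept : (mkPAut S st s0 z0).accept = Fintype.equivFin S z0 := rfl
  simp only [PAut.words, Set.mem_setOf_eq, hstart, haccept, mkPAut_evalFrom S st s0 z0 w s0]
  cases geval st s0 w with
  | none => simp
  | some s => exact Option.some_inj.trans ((Fintype.equivFin S).apply_eq_iff_eq.trans Option.some_inj.symm)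

lemma mkPAut_step_some {S : Type} [Fintype S] {st : S → Sym m → Option S} {s0 z0 : S}
    {i : Fin (mkPAut S st s0 z0).n} {a : Sym m} {j : Fin (mkPAut S st s0 z0).n}
    (h : (mkPAut S st s0 z0).step i a = some j) :
    st ((Fintype.equivFin S).symm i) a = some ((Fintype.equivFin S).symm j) := by
  simp only [mkPAut] at h
  cases hst : st ((Fintype.equivFin S).symm i) a with
  | none => rw [hst] at h; simp at h
  | some s' =>
    rw [hst] at h
    simp only [Option.map_some] at h
    obtain rfl : Fintype.equivFin S s' = j := by injection h
    simp

lemma mkPAut_core (S : Type) [Fintype S] (st : S → Sym m → Option S) (s0 z0 : S)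
    (Hc : ∀ s, ∃ w, geval st s0 w = some s)
    (Hd : ∀ s, ∃ w, geval st s w = some z0)
    (He : ∀ s₁ a₁ s₂ a₂ s, st s₁ a₁ = some s → st s₂ a₂ = some s → a₁ = a₂)
    (Hf : ∀ s' a s, st s' a = some s → st s (a.1, !a.2) = none) :
    (mkPAut S st s0 z0).CoreSpecial := by
  have hstart : (mkPAut S st s0 z0).start = Fintype.equivFin S s0 := rfl
  have haccept : (mkPAut S st s0 z0).accept = Fintype.equivFin S z0 := rfl
  refine ⟨?_, ?_, ?_, ?_⟩
  · intro i
    obtain ⟨w, hw⟩ := Hc ((Fintype.equivFin S).symm i)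
    refine ⟨w, ?_⟩
    rw [hstart, mkPAut_evalFrom, hw]
    exact congrArg some ((Fintype.equivFin S).apply_symm_apply i)
  · intro i
    obtain ⟨w, hw⟩ := Hd ((Fintype.equivFin S).symm i)
    refine ⟨w, ?_⟩
    have hi : i = Fintype.equivFin S ((Fintype.equivFin S).symm i) :=
      (Equiv.apply_symm_apply _ _).symm
    rw [hi, mkPAut_evalFrom, hw, haccept]
    rfl
  · intro i₁ a₁ i₂ a₂ j h₁ h₂
    exact He _ _ _ _ _ (mkPAut_step_some h₁) (mkPAut_step_some h₂)
  · intro i a j h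
    have := Hf _ _ _ (mkPAut_step_some h)
    simp only [mkPAut, this, Option.map_none]

section Refined

variable {σ : Type} (M : DFA (Sym m) σ)

/-- The refined one-step function: states are pairs (DFA state, last letter read),
with transitions cancelling the last letter removed. -/
def stepQ : σ × Option (Sym m) → Sym m → Option (σ × Option (Sym m)) :=
  fun s a => if s.2 = some (a.1, !a.2) then none else some (M.step s.1 a, some a)

/-- Start state of the refined automaton. -/
def startQ : σ × Option (Sym m) := (M.start, none)

lemma stepQ_proj {s : σ × Option (Sym m)} {a : Sym m} {t : σ × Option (Sym m)}
    (h : stepQ M s a = some t) : t = (M.step s.1 a, some a) := by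
  unfold stepQ at h
  split at h
  · exact absurd h (by simp)
  · injection h with h'; exact h'.symm

lemma geval_stepQ_proj :
    ∀ (w : List (Sym m)) (s t : σ × Option (Sym m)),
      geval (stepQ M) s w = some t → M.evalFrom s.1 w = t.1
  | [], s, t, h => by
    obtain rfl : s = t := by injection h
    rfl
  | a :: w, s, t, h => by
    simp only [geval] at h
    cases hst : stepQ M s a with
    | none => rw [hst] at h; exact absurd h (by simp)
    | some s' =>
      rw [hst] at h
      have hs' := stepQ_proj M hst
      have := geval_stepQ_proj w s' t h
      rw [hs'] at this
      simpa [DFA.evalFrom] using this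

lemma geval_stepQ_ok :
    ∀ (w : List (Sym m)) (s t : σ × Option (Sym m)),
      geval (stepQ M) s w = some t → Ok s.2 w
  | [], _, _, _ => trivial
  | a :: w, s, t, h => by
    simp only [geval] at h
    cases hst : stepQ M s a with
    | none => rw [hst] at h; exact absurd h (by simp)
    | some s' =>
      rw [hst] at h
      have hcond : s.2 ≠ some (a.1, !a.2) := by
        intro hc
        unfold stepQ at hst
        rw [if_pos hc] at hst
        exact absurd hst (by simp)
      have hs' := stepQ_proj M hst
      have := geval_stepQ_ok w s' t h
      rw [hs'] at this
      exact ⟨hcond, this⟩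

/-- The tag after reading `w` starting with tag `t`. -/
def endTag : Option (Sym m) → List (Sym m) → Option (Sym m)
  | t, [] => t
  | _, a :: w => endTag (some a) w

lemma geval_stepQ_of_ok :
    ∀ (w : List (Sym m)) (q : σ) (t : Option (Sym m)), Ok t w →
      geval (stepQ M) (q, t) w = some (M.evalFrom q w, endTag t w)
  | [], q, t, _ => rfl
  | a :: w, q, t, h => by
    have hst : stepQ M (q, t) a = some (M.step q a, some a) := by
      unfold stepQ
      rw [if_neg h.1]
    simp only [geval, hst, endTag]
    have := geval_stepQ_of_ok w (M.step q a) (some a) h.2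
    rw [this]
    rfl

/-- Reachability from the start in the refined automaton. -/
def Reach (s : σ × Option (Sym m)) : Prop :=
  ∃ w, geval (stepQ M) (startQ M) w = some s

/-- Goodness relative to a target state `z`. -/
def Good (z s : σ × Option (Sym m)) : Prop :=
  Reach M s ∧ ∃ w, geval (stepQ M) s w = some z

/-- The trimmed state space for target `z`. -/
def TS (z : σ × Option (Sym m)) : Type := {s : σ × Option (Sym m) // Good M z s}

noncomputable instance (z : σ × Option (Sym m)) [Fintype σ] : Fintype (TS M z) := by
  have : Finite (TS M z) := by unfold TS; infer_instance
  exact Fintype.ofFinite _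

/-- The trimmed step function for target `z`. -/
noncomputable def stepS (z : σ × Option (Sym m)) : TS M z → Sym m → Option (TS M z) :=
  fun s a => (stepQ M s.1 a).bind
    (fun s' => if h : Good M z s' then some ⟨s', h⟩ else none)

lemma stepS_proj {z : σ × Option (Sym m)} {s : TS M z} {a : Sym m} {t : TS M z}
    (h : stepS M z s a = some t) : stepQ M s.1 a = some t.1 := by
  unfold stepS at h
  cases hst : stepQ M s.1 a with
  | none => rw [hst] at h; exact absurd h (by simp)
  | some s' =>
    rw [hst] at h
    rw [Option.bind_some] at h
    split at h
    · obtain rfl : (⟨s', ‹Good M z s'›⟩ : TS M z) = t := by injection h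
      rfl
    · exact absurd h (by simp)

lemma stepS_of_good {z : σ × Option (Sym m)} {s : TS M z} {a : Sym m}
    {s' : σ × Option (Sym m)} (hst : stepQ M s.1 a = some s') (h : Good M z s') :
    stepS M z s a = some ⟨s', h⟩ := by
  unfold stepS
  rw [hst, Option.bind_some, dif_pos h]

lemma geval_stepS_proj {z : σ × Option (Sym m)} :
    ∀ (w : List (Sym m)) (s t : TS M z),
      geval (stepS M z) s w = some t → geval (stepQ M) s.1 w = some t.1
  | [], s, t, h => by
    obtain rfl : s = t := by injection h
    rfl
  | a :: w, s, t, h => by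
    simp only [geval] at h ⊢
    cases hst : stepS M z s a with
    | none => rw [hst] at h; exact absurd h (by simp)
    | some s' =>
      rw [hst] at h
      rw [stepS_proj M hst]
      exact geval_stepS_proj w s' t h

lemma geval_stepS_lift {z : σ × Option (Sym m)} :
    ∀ (w : List (Sym m)) (s : TS M z) (t : σ × Option (Sym m)) (ht : Good M z t),
      geval (stepQ M) s.1 w = some t → geval (stepS M z) s w = some ⟨t, ht⟩
  | [], s, t, ht, h => by
    have : s.1 = t := by injection h
    simp only [geval]
    congr 1
    exact Subtype.ext this
  | a :: w, s, t, ht, h => by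
    simp only [geval] at h
    cases hst : stepQ M s.1 a with
    | none => rw [hst] at h; exact absurd h (by simp)
    | some s' =>
      rw [hst] at h
      change geval (stepQ M) s' w = some t at h
      have hgood : Good M z s' := by
        constructor
        · obtain ⟨u, hu⟩ := s.2.1
          refine ⟨u ++ [a], ?_⟩
          rw [geval_append, hu]
          simp [geval, hst]
        · obtain ⟨v, hv⟩ := ht.2
          refine ⟨w ++ v, ?_⟩
          rw [geval_append, h]
          simpa using hv
      have hs := stepS_of_good M hst hgood
      simp only [geval, hs]
      exact geval_stepS_lift w ⟨s', hgood⟩ t ht h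

section Automaton

variable [Fintype σ]

/-- The trimmed special automaton with target `z`. -/
noncomputable def aut (z : σ × Option (Sym m)) (h0 : Good M z (startQ M)) (hz : Good M z z) :
    PAut m :=
  mkPAut (TS M z) (stepS M z) ⟨startQ M, h0⟩ ⟨z, hz⟩

lemma aut_words (z : σ × Option (Sym m)) (h0 : Good M z (startQ M)) (hz : Good M z z) :
    (aut M z h0 hz).words = {w | geval (stepQ M) (startQ M) w = some z} := by
  unfold aut
  refine (mkPAut_words _ _ _ _).trans ?_
  ext w
  simp only [Set.mem_setOf_eq]
  constructor
  · exact fun hw => geval_stepS_proj M w _ _ hw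
  · exact fun hw => geval_stepS_lift M w ⟨startQ M, h0⟩ z hz hw

lemma aut_core (z : σ × Option (Sym m)) (h0 : Good M z (startQ M)) (hz : Good M z z) :
    (aut M z h0 hz).CoreSpecial := by
  unfold aut
  apply mkPAut_core
  · intro s
    obtain ⟨w, hw⟩ := s.2.1
    exact ⟨w, geval_stepS_lift M w ⟨startQ M, h0⟩ s.1 s.2 hw⟩
  · intro s
    obtain ⟨w, hw⟩ := s.2.2
    exact ⟨w, geval_stepS_lift M w s z hz hw⟩
  · intro s₁ a₁ s₂ a₂ s h₁ h₂
    have e₁ := stepQ_proj M (stepS_proj M h₁)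
    have e₂ := stepQ_proj M (stepS_proj M h₂)
    have hsnd : some a₁ = some a₂ := by
      have := congrArg Prod.snd (e₁.symm.trans e₂)
      exact this
    injection hsnd
  · intro s' a s h
    have hs : s.1.2 = some a := congrArg Prod.snd (stepQ_proj M (stepS_proj M h))
    have hcond : s.1.2 = some ((a.1, !a.2).1, !(a.1, !a.2).2) := by
      rw [hs]
      simp
    unfold stepS stepQ
    rw [if_pos hcond, Option.bind_none]

lemma aut_monoid (z : σ × Option (Sym m)) (h0 : Good M z (startQ M)) (hz : Good M z z)
    (hs : z = startQ M) : (aut M z h0 hz).IsSpecialMonoidAut := by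
  refine ⟨?_, aut_core M z h0 hz⟩
  show Fintype.equivFin (TS M z) ⟨startQ M, h0⟩ = Fintype.equivFin (TS M z) ⟨z, hz⟩
  exact congrArg _ (Subtype.ext hs.symm)

lemma aut_special (z : σ × Option (Sym m)) (h0 : Good M z (startQ M)) (hz : Good M z z)
    (hs : z ≠ startQ M) : (aut M z h0 hz).IsSpecial := by
  refine ⟨?_, ?_, aut_core M z h0 hz⟩
  · intro h
    have h' : (⟨startQ M, h0⟩ : TS M z) = ⟨z, hz⟩ :=
      (Fintype.equivFin (TS M z)).injective h
    exact hs (congrArg Subtype.val h').symm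
  · intro s a h
    unfold aut at h
    have h2 := mkPAut_step_some h
    have hst : (mkPAut (TS M z) (stepS M z) ⟨startQ M, h0⟩ ⟨z, hz⟩).start
        = Fintype.equivFin (TS M z) ⟨startQ M, h0⟩ := rfl
    rw [hst] at h2
    have h2 := h2.trans (congrArg some (Equiv.symm_apply_apply _ _))
    have h3 := stepQ_proj M (stepS_proj M h2)
    have h4 : (none : Option (Sym m)) = some a := congrArg Prod.snd h3
    exact nomatch h4

end Automaton

end Refined

end Stmt4Aux

open Stmt4Aux in
lemma stmt4_aux_main {m : ℕ} (L : Set (FG m)) (hL : IsRegularSet L) :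
    ∃ (k : ℕ) (Ls : Fin k → Set (FG m)),
      (∀ i j, i ≠ j → Disjoint (Ls i) (Ls j)) ∧
      L = ⋃ i, Ls i ∧
      ∀ i, (∃ A : PAut m, A.IsSpecial ∧ Ls i = A.lang) ∨ IsSpecialMonoid (Ls i) := by
  classical
  obtain ⟨σ, instσ, M, hM⟩ := hL
  haveI := instσ
  let Z := {z : σ × Option (Sym m) // z.1 ∈ M.accept ∧ Reach M z}
  haveI : Fintype Z := Fintype.ofFinite _
  let eZ := Fintype.equivFin Z
  have hgs : ∀ z : Z, Good M z.1 (startQ M) := fun z => ⟨⟨[], rfl⟩, z.2.2⟩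
  have hgz : ∀ z : Z, Good M z.1 z.1 := fun z => ⟨z.2.2, ⟨[], rfl⟩⟩
  have hmem : ∀ (z : Z) (g : FG m),
      g ∈ (aut M z.1 (hgs z) (hgz z)).lang ↔
        geval (stepQ M) (startQ M) (FreeGroup.toWord g) = some z.1 := by
    intro z g
    constructor
    · rintro ⟨w, hw, rfl⟩
      rw [aut_words] at hw
      have hok : Ok (startQ M).2 w := geval_stepQ_ok M w _ _ hw
      have hred : FreeGroup.reduce w = w := ok_reduce w _ hok
      rw [FreeGroup.toWord_mk, hred]
      exact hw
    · intro h
      refine ⟨FreeGroup.toWord g, ?_, FreeGroup.mk_toWord⟩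
      rw [aut_words]
      exact h
  refine ⟨Fintype.card Z,
    fun i => (aut M (eZ.symm i).1 (hgs (eZ.symm i)) (hgz (eZ.symm i))).lang, ?_, ?_, ?_⟩
  · intro i j hij
    rw [Set.disjoint_left]
    intro g hgi hgj
    rw [hmem (eZ.symm i) g] at hgi
    rw [hmem (eZ.symm j) g] at hgj
    apply hij
    have hz : (eZ.symm i).1 = (eZ.symm j).1 := by
      have h := hgi.symm.trans hgj
      injection h
    exact eZ.symm.injective (Subtype.ext hz)
  · ext g
    simp only [Set.mem_iUnion]
    constructor
    · intro hg
      have hacc : FreeGroup.toWord g ∈ M.accepts := by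
        rw [hM]
        exact ⟨g, hg, rfl⟩
      rw [DFA.mem_accepts] at hacc
      have hok : Ok (none : Option (Sym m)) (FreeGroup.toWord g) :=
        reduce_ok _ (FreeGroup.reduce_toWord g) none (fun a _ h => by cases h)
      have hev : geval (stepQ M) (startQ M) (FreeGroup.toWord g)
          = some (M.evalFrom M.start (FreeGroup.toWord g), endTag none (FreeGroup.toWord g)) :=
        geval_stepQ_of_ok M (FreeGroup.toWord g) M.start none hok
      have hzmem : (M.evalFrom M.start (FreeGroup.toWord g), endTag none (FreeGroup.toWord g)).1
          ∈ M.accept ∧ Reach M (M.evalFrom M.start (FreeGroup.toWord g),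
            endTag none (FreeGroup.toWord g)) := ⟨hacc, ⟨FreeGroup.toWord g, hev⟩⟩
      refine ⟨eZ ⟨_, hzmem⟩, ?_⟩
      rw [hmem _ g]
      rw [Equiv.symm_apply_apply]
      exact hev
    · rintro ⟨i, hgi⟩
      rw [hmem (eZ.symm i) g] at hgi
      have hproj := geval_stepQ_proj M (FreeGroup.toWord g) _ _ hgi
      have hacc : FreeGroup.toWord g ∈ M.accepts := by
        rw [DFA.mem_accepts]
        have h2 : M.eval (FreeGroup.toWord g) = (eZ.symm i).1.1 := hproj
        rw [h2]
        exact (eZ.symm i).2.1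
      rw [hM] at hacc
      obtain ⟨g', hg', hgw⟩ := hacc
      have hgg : g' = g := by
        rw [← FreeGroup.mk_toWord (x := g'), hgw, FreeGroup.mk_toWord]
      rwa [← hgg]
  · intro i
    by_cases hz : (eZ.symm i).1 = startQ M
    · right
      exact ⟨_, aut_monoid M _ (hgs (eZ.symm i)) (hgz (eZ.symm i)) hz, rfl⟩
    · left
      exact ⟨_, aut_special M _ (hgs (eZ.symm i)) (hgz (eZ.symm i)) hz, rfl⟩

/-- every regular set decomposes as a finite disjoint union of languages
of special automata and special monoids. -/
theorem stmt4 {m : ℕ} (hm : 2 ≤ m) (L : Set (FG m)) (hL : IsRegularSet L) :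
    ∃ (k : ℕ) (Ls : Fin k → Set (FG m)),
      (∀ i j, i ≠ j → Disjoint (Ls i) (Ls j)) ∧
      L = ⋃ i, Ls i ∧
      ∀ i, (∃ A : PAut m, A.IsSpecial ∧ Ls i = A.lang) ∨ IsSpecialMonoid (Ls i) := by
  exact stmt4_aux_main L hL
end
end

section
/- Let A be a special automaton over the free group F of rank m ≥ 2 whose final state z₀ has at least one outgoing transition, and let R = L(A). Then there exist subsets R₁, R₂ ⊆ F such that: (i) R₁ = L(A₁) for some special automaton A₁ over F (in particular 1 ∉ R₁); (ii) R₂ is a special monoid (so 1 ∈ R₂); (iii) |uv| = |u| + |v| for all u ∈ R₁ and v ∈ R₂; (iv) R = {uv : u ∈ R₁, v ∈ R₂} and the map (u,v) ↦ uv from R₁ × R₂ to R is a bijection; (v) consequently g_R(t) = g_{R₁}(t) · g*_{R₂}(t) for all real t ∈ (−1,1). -/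
open Filter Set

noncomputable section

/-! ### Auxiliary material -/

namespace Stmt5Aux

abbrev Alp (m : ℕ) := Fin m × Bool

/-- A word is reduced iff no adjacent cancelling pair. -/
def Red {m : ℕ} (w : List (Alp m)) : Prop :=
  List.Chain' (fun a b => b ≠ (a.1, !a.2)) w

lemma red_nil {m : ℕ} : Red ([] : List (Alp m)) := List.isChain_nil

lemma reduce_eq_self {m : ℕ} {w : List (Alp m)} (h : Red w) :
    FreeGroup.reduce w = w := by
  induction w with
  | nil => rfl
  | cons x l ih =>
    rw [FreeGroup.reduce.cons, ih h.tail]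
    cases l with
    | nil => rfl
    | cons hd tl =>
      have hrel : hd ≠ (x.1, !x.2) := (List.isChain_cons_cons.mp h).1
      simp only
      rw [if_neg]
      rintro ⟨h1, h2⟩
      apply hrel
      rw [Prod.ext_iff]
      exact ⟨h1.symm, by simp [h2]⟩

lemma red_reduce {m : ℕ} (w : List (Alp m)) : Red (FreeGroup.reduce w) := by
  induction w with
  | nil => exact red_nil
  | cons x l ih =>
    rw [FreeGroup.reduce.cons]
    cases hr : FreeGroup.reduce l with
    | nil => exact List.isChain_singleton x
    | cons hd tl =>
      rw [hr] at ih
      simp only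
      split_ifs with hc
      · exact ih.tail
      · refine List.isChain_cons_cons.mpr ⟨?_, ih⟩
        intro he
        apply hc
        subst he
        exact ⟨rfl, by simp⟩

lemma red_toWord {m : ℕ} (g : FG m) : Red (FreeGroup.toWord g) := by
  rw [← FreeGroup.reduce_toWord]
  exact red_reduce _

lemma toWord_mk_red {m : ℕ} {w : List (Alp m)} (h : Red w) :
    FreeGroup.toWord (FreeGroup.mk w) = w := by
  rw [FreeGroup.toWord_mk, reduce_eq_self h]

lemma glen_mk_red {m : ℕ} {w : List (Alp m)} (h : Red w) :
    glen (FreeGroup.mk w) = w.length := by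
  rw [glen, toWord_mk_red h]

lemma mk_append {m : ℕ} (u v : List (Alp m)) :
    FreeGroup.mk (u ++ v) = FreeGroup.mk u * FreeGroup.mk v :=
  (FreeGroup.mul_mk).symm

lemma mk_nil_eq_one {m : ℕ} : (FreeGroup.mk ([] : List (Alp m))) = 1 := by
  rw [← FreeGroup.toWord_eq_nil_iff, toWord_mk_red red_nil]

/-! ### Automaton lemmas -/

variable {m : ℕ}

lemma evalFrom_append (A : PAut m) (u v : List (Alp m)) (s : Fin A.n) :
    A.evalFrom s (u ++ v) = (A.evalFrom s u).bind (fun t => A.evalFrom t v) := by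
  induction u generalizing s with
  | nil => simp [PAut.evalFrom]
  | cons a u ih =>
    simp only [List.cons_append, PAut.evalFrom]
    cases A.step s a with
    | none => rfl
    | some s' => exact ih s'

lemma evalFrom_cons (A : PAut m) (a : Alp m) (w : List (Alp m)) {s s' : Fin A.n}
    (h : A.step s a = some s') : A.evalFrom s (a :: w) = A.evalFrom s' w := by
  simp [PAut.evalFrom, h]

lemma evalFrom_cons' (A : PAut m) {a : Alp m} {w : List (Alp m)} {s t : Fin A.n}
    (h : A.evalFrom s (a :: w) = some t) :
    ∃ s', A.step s a = some s' ∧ A.evalFrom s' w = some t := by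
  cases hs : A.step s a with
  | none => simp [PAut.evalFrom, hs] at h
  | some s' => exact ⟨s', rfl, by rwa [evalFrom_cons A a w hs] at h⟩

lemma evalFrom_single (A : PAut m) {a : Alp m} {s s' : Fin A.n}
    (h : A.step s a = some s') : A.evalFrom s [a] = some s' := by
  rw [evalFrom_cons A a [] h]; rfl

/-- Condition (f) only. -/
def StepSpecial (A : PAut m) : Prop :=
  ∀ s' a s, A.step s' a = some s → A.step s (a.1, !a.2) = none

lemma chain_of_evalFrom {A : PAut m} (hA : StepSpecial A) :
    ∀ (w : List (Alp m)) (s t : Fin A.n) (a₀ : Alp m) (sp : Fin A.n),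
      A.step sp a₀ = some s → A.evalFrom s w = some t →
      List.Chain (fun a b => b ≠ (a.1, !a.2)) a₀ w := by
  intro w
  induction w with
  | nil => intro _ _ _ _ _ _; exact List.Chain.nil
  | cons b rest ih =>
    intro s t a₀ sp hstep hev
    obtain ⟨s1, hs1, hev'⟩ := evalFrom_cons' A hev
    refine List.Chain.cons ?_ (ih s1 t b s hs1 hev')
    intro hb
    rw [hb] at hs1
    rw [hA sp a₀ s hstep] at hs1
    cases hs1

lemma red_of_evalFrom {A : PAut m} (hA : StepSpecial A) {w : List (Alp m)}
    {s t : Fin A.n} (h : A.evalFrom s w = some t) : Red w := by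
  cases w with
  | nil => exact red_nil
  | cons a rest =>
    obtain ⟨s1, hs1, hev'⟩ := evalFrom_cons' A h
    exact chain_of_evalFrom hA rest s1 t a s hs1 hev'

end Stmt5Aux
namespace Stmt5Aux

variable {m : ℕ}

/-! ### The `avoid` automaton: remove transitions leaving the accept state -/

@[reducible] def avoid (A : PAut m) : PAut m :=
  ⟨A.n, fun s a => if s = A.accept then none else A.step s a, A.start, A.accept⟩

lemma avoid_n (A : PAut m) : (avoid A).n = A.n := rfl

lemma avoid_step_le (A : PAut m) {s : Fin A.n} {a : Alp m} {t : Fin A.n}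
    (h : (avoid A).step s a = some t) : A.step s a = some t := by
  by_cases hs : s = A.accept
  · simp [avoid, hs] at h
  · simpa [avoid, hs] using h

lemma avoid_step_accept (A : PAut m) (a : Alp m) :
    (avoid A).step A.accept a = none := by simp [avoid]

lemma avoid_step_ne (A : PAut m) {s : Fin A.n} (hs : s ≠ A.accept) (a : Alp m) :
    (avoid A).step s a = A.step s a := by simp [avoid, hs]

lemma evalFrom_avoid_le (A : PAut m) :
    ∀ (w : List (Alp m)) (s t : Fin A.n),
      (avoid A).evalFrom s w = some t → A.evalFrom s w = some t := by
  intro w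
  induction w with
  | nil => intro s t h; exact h
  | cons a rest ih =>
    intro s t h
    obtain ⟨s', hs', h'⟩ := evalFrom_cons' (avoid A) h
    rw [evalFrom_cons A a rest (avoid_step_le A hs')]
    exact ih s' t h'

lemma avoid_stepSpecial {A : PAut m} (hA : StepSpecial A) : StepSpecial (avoid A) := by
  intro s' a s h
  by_cases hs : s = A.accept
  · rw [hs]; exact avoid_step_accept A _
  · rw [avoid_step_ne A hs]
    exact hA s' a s (avoid_step_le A h)

/-- Truncation: any path to the accept state yields an `avoid`-path. -/
lemma trunc (A : PAut m) :
    ∀ (w : List (Alp m)) (s : Fin A.n), A.evalFrom s w = some A.accept →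
      ∃ w', (avoid A).evalFrom s w' = some A.accept := by
  intro w
  induction w with
  | nil =>
    intro s h
    exact ⟨[], h⟩
  | cons a rest ih =>
    intro s h
    by_cases hs : s = A.accept
    · exact ⟨[], by rw [hs]; rfl⟩
    · obtain ⟨s1, hs1, h'⟩ := evalFrom_cons' A h
      obtain ⟨w', hw'⟩ := ih s1 h'
      refine ⟨a :: w', ?_⟩
      rw [evalFrom_cons (avoid A) a w' (by rw [avoid_step_ne A hs]; exact hs1)]
      exact hw'

/-- Splitting at the first visit of the accept state. -/
lemma split (A : PAut m) :
    ∀ (w : List (Alp m)) (s : Fin A.n), s ≠ A.accept →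
      A.evalFrom s w = some A.accept →
      ∃ u v, w = u ++ v ∧ (avoid A).evalFrom s u = some A.accept ∧
        A.evalFrom A.accept v = some A.accept := by
  intro w
  induction w with
  | nil =>
    intro s hs h
    exact absurd (Option.some_injective _ h) hs
  | cons a rest ih =>
    intro s hs h
    obtain ⟨s1, hs1, h'⟩ := evalFrom_cons' A h
    have hs1' : (avoid A).step s a = some s1 := by
      rw [avoid_step_ne A hs]; exact hs1
    by_cases h1 : s1 = A.accept
    · refine ⟨[a], rest, rfl, ?_, ?_⟩
      · rw [evalFrom_single (avoid A) hs1', h1]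
      · exact h1 ▸ h'
    · obtain ⟨u, v, huv, hu, hv⟩ := ih s1 h1 h'
      exact ⟨a :: u, v, by simp [huv], by rw [evalFrom_cons (avoid A) a u hs1']; exact hu, hv⟩

lemma avoid_stop (A : PAut m) {u x : List (Alp m)} {s : Fin A.n}
    (hu : (avoid A).evalFrom s u = some A.accept) (hx : x ≠ []) :
    (avoid A).evalFrom s (u ++ x) = none := by
  rw [evalFrom_append, hu, Option.bind_some]
  cases x with
  | nil => exact absurd rfl hx
  | cons a rest =>
    simp [PAut.evalFrom, avoid_step_accept]

end Stmt5Aux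
namespace Stmt5Aux

variable {m : ℕ}

/-! ### Pruning an automaton to the states reachable from a given state -/

/-- Reachability from `s₀`. -/
def Rch (A : PAut m) (s₀ s : Fin A.n) : Prop := ∃ w, A.evalFrom s₀ w = some s

lemma rch_self (A : PAut m) (s₀ : Fin A.n) : Rch A s₀ s₀ := ⟨[], rfl⟩

lemma rch_step (A : PAut m) {s₀ s t : Fin A.n} {a : Alp m}
    (hs : Rch A s₀ s) (h : A.step s a = some t) : Rch A s₀ t := by
  obtain ⟨w, hw⟩ := hs
  exact ⟨w ++ [a], by rw [evalFrom_append, hw, Option.bind_some, evalFrom_single A h]⟩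

def pruneCard (A : PAut m) (s₀ : Fin A.n) : ℕ :=
  letI : Fintype {s // Rch A s₀ s} := Fintype.ofFinite _
  Fintype.card {s // Rch A s₀ s}

def pruneEquiv (A : PAut m) (s₀ : Fin A.n) : {s // Rch A s₀ s} ≃ Fin (pruneCard A s₀) :=
  letI : Fintype {s // Rch A s₀ s} := Fintype.ofFinite _
  Fintype.equivFin _

/-- The pruned automaton, with states the reachable states, start `s₀`, accept `z`. -/
@[reducible] def prune (A : PAut m) (s₀ z : Fin A.n) (hz : Rch A s₀ z) : PAut m where
  n := pruneCard A s₀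
  step := fun t a =>
    (A.step ((pruneEquiv A s₀).symm t).1 a).bind
      (fun s' => @dite _ (Rch A s₀ s') (Classical.dec _)
        (fun h => some (pruneEquiv A s₀ ⟨s', h⟩)) (fun _ => none))
  start := pruneEquiv A s₀ ⟨s₀, rch_self A s₀⟩
  accept := pruneEquiv A s₀ ⟨z, hz⟩

lemma prune_step_some (A : PAut m) (s₀ z : Fin A.n) (hz : Rch A s₀ z)
    (s : {s // Rch A s₀ s}) (a : Alp m) {s' : Fin A.n} (h : A.step s.1 a = some s') :
    (prune A s₀ z hz).step (pruneEquiv A s₀ s) a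
      = some (pruneEquiv A s₀ ⟨s', rch_step A s.2 h⟩) := by
  simp only [prune, Equiv.symm_apply_apply]
  rw [h, Option.bind_some, dif_pos (rch_step A s.2 h)]

lemma prune_step_none (A : PAut m) (s₀ z : Fin A.n) (hz : Rch A s₀ z)
    (s : {s // Rch A s₀ s}) (a : Alp m) (h : A.step s.1 a = none) :
    (prune A s₀ z hz).step (pruneEquiv A s₀ s) a = none := by
  simp only [prune, Equiv.symm_apply_apply]
  rw [h, Option.bind_none]

lemma prune_step_inv (A : PAut m) (s₀ z : Fin A.n) (hz : Rch A s₀ z)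
    {t : Fin (prune A s₀ z hz).n} {a : Alp m} {t' : Fin (prune A s₀ z hz).n}
    (h : (prune A s₀ z hz).step t a = some t') :
    ∃ (s' : Fin A.n) (hs' : Rch A s₀ s'),
      A.step ((pruneEquiv A s₀).symm t).1 a = some s' ∧
        t' = pruneEquiv A s₀ ⟨s', hs'⟩ := by
  cases hstep : A.step ((pruneEquiv A s₀).symm t).1 a with
  | none =>
    rw [show t = pruneEquiv A s₀ ((pruneEquiv A s₀).symm t) by simp] at h
    rw [prune_step_none A s₀ z hz _ a (by simpa using hstep)] at h
    cases h
  | some s' =>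
    refine ⟨s', rch_step A ((pruneEquiv A s₀).symm t).2 hstep, rfl, ?_⟩
    rw [show t = pruneEquiv A s₀ ((pruneEquiv A s₀).symm t) by simp] at h
    rw [prune_step_some A s₀ z hz _ a (by simpa using hstep)] at h
    exact (Option.some_injective _ h).symm

lemma prune_evalFrom_fwd (A : PAut m) (s₀ z : Fin A.n) (hz : Rch A s₀ z) :
    ∀ (w : List (Alp m)) (s : {s // Rch A s₀ s}) (t : Fin A.n),
      A.evalFrom s.1 w = some t →
      ∃ ht : Rch A s₀ t,
        (prune A s₀ z hz).evalFrom (pruneEquiv A s₀ s) w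
          = some (pruneEquiv A s₀ ⟨t, ht⟩) := by
  intro w
  induction w with
  | nil =>
    intro s t h
    have : s.1 = t := Option.some_injective _ h
    subst this
    exact ⟨s.2, rfl⟩
  | cons a rest ih =>
    intro s t h
    obtain ⟨s1, hs1, h'⟩ := evalFrom_cons' A h
    obtain ⟨ht, hev⟩ := ih ⟨s1, rch_step A s.2 hs1⟩ t h'
    refine ⟨ht, ?_⟩
    rw [evalFrom_cons (prune A s₀ z hz) a rest (prune_step_some A s₀ z hz s a hs1)]
    exact hev

lemma prune_evalFrom_bwd (A : PAut m) (s₀ z : Fin A.n) (hz : Rch A s₀ z) :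
    ∀ (w : List (Alp m)) (s : {s // Rch A s₀ s}) (t : Fin (prune A s₀ z hz).n),
      (prune A s₀ z hz).evalFrom (pruneEquiv A s₀ s) w = some t →
      A.evalFrom s.1 w = some ((pruneEquiv A s₀).symm t).1 := by
  intro w
  induction w with
  | nil =>
    intro s t h
    have : pruneEquiv A s₀ s = t := Option.some_injective _ h
    rw [← this]
    simp only [Equiv.symm_apply_apply]
    rfl
  | cons a rest ih =>
    intro s t h
    obtain ⟨t1, ht1, h'⟩ := evalFrom_cons' (prune A s₀ z hz) h
    obtain ⟨s1, hs1, hstep, rfl⟩ := prune_step_inv A s₀ z hz ht1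
    have := ih ⟨s1, hs1⟩ t (by simpa using h')
    rw [evalFrom_cons A a rest (by simpa using hstep)]
    exact this

lemma prune_words (A : PAut m) (s₀ z : Fin A.n) (hz : Rch A s₀ z) :
    (prune A s₀ z hz).words = {w | A.evalFrom s₀ w = some z} := by
  ext w
  constructor
  · intro h
    have := prune_evalFrom_bwd A s₀ z hz w ⟨s₀, rch_self A s₀⟩ _ h
    have hacc : (prune A s₀ z hz).accept = pruneEquiv A s₀ ⟨z, hz⟩ := rfl
    rw [hacc] at this
    simpa using this
  · intro h
    obtain ⟨ht, hev⟩ := prune_evalFrom_fwd A s₀ z hz w ⟨s₀, rch_self A s₀⟩ z h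
    show (prune A s₀ z hz).evalFrom (prune A s₀ z hz).start w
      = some (prune A s₀ z hz).accept
    have hst : (prune A s₀ z hz).start = pruneEquiv A s₀ ⟨s₀, rch_self A s₀⟩ := rfl
    have hacc : (prune A s₀ z hz).accept = pruneEquiv A s₀ ⟨z, hz⟩ := rfl
    rw [hst, hacc, hev]

end Stmt5Aux
namespace Stmt5Aux

variable {m : ℕ}

lemma prune_core (A : PAut m) (s₀ z : Fin A.n) (hz : Rch A s₀ z)
    (he : ∀ s₁ a₁ s₂ a₂ s, A.step s₁ a₁ = some s → A.step s₂ a₂ = some s → a₁ = a₂)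
    (hf : StepSpecial A)
    (hd : ∀ s, Rch A s₀ s → ∃ w, A.evalFrom s w = some z) :
    (prune A s₀ z hz).CoreSpecial := by
  set e := pruneEquiv A s₀ with he'
  refine ⟨?_, ?_, ?_, ?_⟩
  · -- (c) reachability from start
    intro t
    obtain ⟨w, hw⟩ := (e.symm t).2
    obtain ⟨ht, hev⟩ := prune_evalFrom_fwd A s₀ z hz w ⟨s₀, rch_self A s₀⟩ _ hw
    refine ⟨w, ?_⟩
    have hst : (prune A s₀ z hz).start = e ⟨s₀, rch_self A s₀⟩ := rfl
    rw [hst, hev]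
    congr 1
    rw [show (⟨(e.symm t).1, ht⟩ : {s // Rch A s₀ s}) = e.symm t from Subtype.ext rfl]
    exact e.apply_symm_apply t
  · -- (d) accept reachable from everywhere
    intro t
    obtain ⟨w, hw⟩ := hd (e.symm t).1 (e.symm t).2
    obtain ⟨ht, hev⟩ := prune_evalFrom_fwd A s₀ z hz w (e.symm t) _ hw
    refine ⟨w, ?_⟩
    rw [show e (e.symm t) = t by simp] at hev
    rw [hev]
  · -- (e) unique entering label
    intro t₁ a₁ t₂ a₂ t h₁ h₂
    obtain ⟨s₁, hs₁, hstep₁, rfl⟩ := prune_step_inv A s₀ z hz h₁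
    obtain ⟨s₂, hs₂, hstep₂, heq⟩ := prune_step_inv A s₀ z hz h₂
    have : s₂ = s₁ := (congrArg Subtype.val (e.injective heq)).symm
    exact he _ a₁ _ a₂ s₁ hstep₁ (this ▸ hstep₂)
  · -- (f)
    intro t' a t h
    obtain ⟨s', hs', hstep, rfl⟩ := prune_step_inv A s₀ z hz h
    have : A.step s' (a.1, !a.2) = none := hf _ a s' hstep
    have h2 := prune_step_none A s₀ z hz ⟨s', hs'⟩ (a.1, !a.2) this
    exact h2

end Stmt5Aux
namespace Stmt5Aux

variable {m : ℕ}

/-- The word-level split languages. -/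
def W1 (A : PAut m) : Set (List (Alp m)) :=
  {w | (avoid A).evalFrom A.start w = some A.accept}

def W2 (A : PAut m) : Set (List (Alp m)) :=
  {w | A.evalFrom A.accept w = some A.accept}

lemma main_aut (A : PAut m) (hA : A.IsSpecial) :
    ∃ A₁ A₂ : PAut m, A₁.IsSpecial ∧ A₂.IsSpecialMonoidAut ∧
      A₁.words = W1 A ∧ A₂.words = W2 A := by
  obtain ⟨hne, hb, hc, hd, he, hf⟩ := hA
  have hf' : StepSpecial A := hf
  -- A₁
  have hz₁ : Rch (avoid A) A.start A.accept := by
    obtain ⟨w, hw⟩ := hc A.accept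
    exact trunc A w A.start hw
  set A₁ := prune (avoid A) A.start A.accept hz₁ with hA₁
  -- A₂
  have hz₂ : Rch A A.accept A.accept := rch_self A A.accept
  set A₂ := prune A A.accept A.accept hz₂ with hA₂
  refine ⟨A₁, A₂, ⟨?_, ?_, ?_⟩, ⟨rfl, ?_⟩, ?_, ?_⟩
  · -- start ≠ accept
    intro h
    have := (pruneEquiv (avoid A) A.start).injective h
    exact hne (congrArg Subtype.val this)
  · -- nothing enters start
    intro t a h
    obtain ⟨s', hs', hstep, heq⟩ := prune_step_inv (avoid A) A.start A.accept hz₁ h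
    have h2 : pruneEquiv (avoid A) A.start ⟨A.start, rch_self (avoid A) A.start⟩
        = pruneEquiv (avoid A) A.start ⟨s', hs'⟩ := heq
    have hval : A.start = s' :=
      congrArg Subtype.val ((pruneEquiv (avoid A) A.start).injective h2)
    have hstep' := avoid_step_le A hstep
    rw [← hval] at hstep'
    exact hb _ a hstep'
  · -- CoreSpecial of A₁
    refine prune_core (avoid A) A.start A.accept hz₁ ?_ (avoid_stepSpecial hf') ?_
    · intro s₁ a₁ s₂ a₂ s h₁ h₂
      exact he s₁ a₁ s₂ a₂ s (avoid_step_le A h₁) (avoid_step_le A h₂)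
    · intro s _
      obtain ⟨w, hw⟩ := hd s
      exact trunc A w s hw
  · -- CoreSpecial of A₂
    exact prune_core A A.accept A.accept hz₂ he hf' (fun s _ => hd s)
  · exact prune_words (avoid A) A.start A.accept hz₁
  · exact prune_words A A.accept A.accept hz₂

lemma W1_red {A : PAut m} (hA : StepSpecial A) {w : List (Alp m)} (h : w ∈ W1 A) : Red w :=
  red_of_evalFrom (avoid_stepSpecial hA) h

lemma W2_red {A : PAut m} (hA : StepSpecial A) {w : List (Alp m)} (h : w ∈ W2 A) : Red w :=
  red_of_evalFrom hA h

lemma words_red {A : PAut m} (hA : StepSpecial A) {w : List (Alp m)} (h : w ∈ A.words) : Red w :=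
  red_of_evalFrom hA h

lemma W1_append_W2 {A : PAut m} {u v : List (Alp m)} (hu : u ∈ W1 A) (hv : v ∈ W2 A) :
    u ++ v ∈ A.words := by
  show A.evalFrom A.start (u ++ v) = some A.accept
  rw [evalFrom_append, evalFrom_avoid_le A u A.start A.accept hu, Option.bind_some]
  exact hv

lemma words_split {A : PAut m} (hne : A.start ≠ A.accept) {w : List (Alp m)}
    (h : w ∈ A.words) : ∃ u ∈ W1 A, ∃ v ∈ W2 A, w = u ++ v := by
  obtain ⟨u, v, huv, hu, hv⟩ := split A w A.start hne h
  exact ⟨u, hu, v, hv, huv⟩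

lemma W1_unique_aux {A : PAut m} {u u' v v' : List (Alp m)} (hu : u ∈ W1 A) (hu' : u' ∈ W1 A)
    (h : u ++ v = u' ++ v') (hle : u.length ≤ u'.length) : u = u' := by
  have hpre : u <+: u' := by
    have h1 : u <+: u' ++ v' := h ▸ (u.prefix_append v)
    exact List.prefix_of_prefix_length_le h1 (u'.prefix_append v') hle
  obtain ⟨x, rfl⟩ := hpre
  cases hx : x with
  | nil => simp [hx]
  | cons b l =>
    exfalso
    have h3 := avoid_stop A (s := A.start) (x := x) hu (by simp [hx])
    have h4 : (avoid A).evalFrom A.start (u ++ x) = some A.accept := hu'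
    rw [h4] at h3
    cases h3

lemma words_split_unique {A : PAut m} {u u' v v' : List (Alp m)}
    (hu : u ∈ W1 A) (hu' : u' ∈ W1 A) (hv : v ∈ W2 A) (hv' : v' ∈ W2 A)
    (h : u ++ v = u' ++ v') : u = u' ∧ v = v' := by
  have heq : u = u' := by
    rcases le_total u.length u'.length with hle | hle
    · exact W1_unique_aux hu hu' h hle
    · exact (W1_unique_aux hu' hu h.symm hle).symm
  subst heq
  exact ⟨rfl, List.append_cancel_left h⟩

end Stmt5Aux
namespace Stmt5Aux

variable {m : ℕ}

lemma mem_image_red {Ws : Set (List (Alp m))} (hred : ∀ w ∈ Ws, Red w) {g : FG m} :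
    g ∈ FreeGroup.mk '' Ws ↔ FreeGroup.toWord g ∈ Ws := by
  constructor
  · rintro ⟨w, hw, rfl⟩
    rwa [toWord_mk_red (hred w hw)]
  · intro h
    exact ⟨FreeGroup.toWord g, h, FreeGroup.mk_toWord⟩

section Main

variable {A : PAut m}

lemma lang_eq_image : A.lang = FreeGroup.mk '' A.words := rfl

lemma hfA (hA : A.IsSpecial) : StepSpecial A := hA.2.2.2.2.2

/-- Elements of `mk '' W1` and `mk '' W2` multiply with additive length,
and products lie in the language. -/
lemma mul_mem_lang (hA : A.IsSpecial) {u v : FG m} (hu : u ∈ FreeGroup.mk '' W1 A)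
    (hv : v ∈ FreeGroup.mk '' W2 A) :
    u * v ∈ A.lang ∧ glen (u * v) = glen u + glen v ∧
      FreeGroup.toWord (u * v) = FreeGroup.toWord u ++ FreeGroup.toWord v := by
  have hf := hfA hA
  have hu' : FreeGroup.toWord u ∈ W1 A := (mem_image_red (fun w hw => W1_red hf hw)).mp hu
  have hv' : FreeGroup.toWord v ∈ W2 A := (mem_image_red (fun w hw => W2_red hf hw)).mp hv
  have hw : FreeGroup.toWord u ++ FreeGroup.toWord v ∈ A.words := W1_append_W2 hu' hv'
  have hwred : Red (FreeGroup.toWord u ++ FreeGroup.toWord v) := words_red hf hw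
  have hmul : u * v = FreeGroup.mk (FreeGroup.toWord u ++ FreeGroup.toWord v) := by
    rw [mk_append, FreeGroup.mk_toWord, FreeGroup.mk_toWord]
  refine ⟨?_, ?_, ?_⟩
  · rw [lang_eq_image, hmul]; exact ⟨_, hw, rfl⟩
  · rw [hmul, glen_mk_red hwred, List.length_append]; rfl
  · rw [hmul, toWord_mk_red hwred]

lemma lang_eq_prod (hA : A.IsSpecial) :
    A.lang = {g : FG m | ∃ u ∈ FreeGroup.mk '' W1 A, ∃ v ∈ FreeGroup.mk '' W2 A, g = u * v} := by
  have hf := hfA hA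
  ext g
  constructor
  · rintro ⟨w, hw, rfl⟩
    obtain ⟨u, hu, v, hv, rfl⟩ := words_split hA.1 hw
    exact ⟨FreeGroup.mk u, ⟨u, hu, rfl⟩, FreeGroup.mk v, ⟨v, hv, rfl⟩, (mk_append u v)⟩
  · rintro ⟨u, hu, v, hv, rfl⟩
    exact (mul_mem_lang hA hu hv).1

lemma prod_unique (hA : A.IsSpecial) {u v u' v' : FG m}
    (hu : u ∈ FreeGroup.mk '' W1 A) (hv : v ∈ FreeGroup.mk '' W2 A)
    (hu' : u' ∈ FreeGroup.mk '' W1 A) (hv' : v' ∈ FreeGroup.mk '' W2 A)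
    (h : u * v = u' * v') : u = u' ∧ v = v' := by
  have hf := hfA hA
  have h1 := (mul_mem_lang hA hu hv).2.2
  have h2 := (mul_mem_lang hA hu' hv').2.2
  rw [h, h2] at h1
  have := words_split_unique (A := A)
    ((mem_image_red (fun w hw => W1_red hf hw)).mp hu')
    ((mem_image_red (fun w hw => W1_red hf hw)).mp hu)
    ((mem_image_red (fun w hw => W2_red hf hw)).mp hv')
    ((mem_image_red (fun w hw => W2_red hf hw)).mp hv) h1
  constructor
  · rw [← FreeGroup.mk_toWord (x := u), ← FreeGroup.mk_toWord (x := u'), this.1]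
  · rw [← FreeGroup.mk_toWord (x := v), ← FreeGroup.mk_toWord (x := v'), this.2]

lemma one_not_mem_R1 (hA : A.IsSpecial) : (1 : FG m) ∉ FreeGroup.mk '' W1 A := by
  have hf := hfA hA
  intro h
  have h1 : FreeGroup.toWord (1 : FG m) ∈ W1 A :=
    (mem_image_red (fun w hw => W1_red hf hw)).mp h
  rw [FreeGroup.toWord_one] at h1
  have h2 : (some A.start : Option (Fin A.n)) = some A.accept := h1
  exact hA.1 (Option.some_injective _ h2)

lemma one_mem_R2 : (1 : FG m) ∈ FreeGroup.mk '' W2 A :=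
  ⟨[], rfl, mk_nil_eq_one⟩

end Main

end Stmt5Aux
namespace Stmt5Aux

variable {m : ℕ}

lemma finite_len (R : Set (FG m)) (k : ℕ) : {g ∈ R | glen g = k}.Finite := by
  have h1 : {l : List (Alp m) | l.length = k}.Finite := List.finite_length_eq _ _
  have h2 : {g : FG m | glen g = k}.Finite :=
    h1.preimage (FreeGroup.toWord_injective.injOn)
  exact h2.subset (fun g hg => hg.2)

/-- The finite set of reduced words of length `k`. -/
lemma finite_redlen (m k : ℕ) : {w : List (Alp m) | Red w ∧ w.length = k}.Finite :=
  (List.finite_length_eq _ _).subset (fun w hw => hw.2)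

def RW (m k : ℕ) : Finset (List (Alp m)) := (finite_redlen m k).toFinset

lemma mem_RW {k : ℕ} {w : List (Alp m)} : w ∈ RW m k ↔ Red w ∧ w.length = k :=
  (finite_redlen m k).mem_toFinset

lemma RW_zero : (RW m 0).card = 1 := by
  have : RW m 0 = {[]} := by
    ext w
    rw [mem_RW, Finset.mem_singleton]
    constructor
    · rintro ⟨_, hl⟩; exact List.length_eq_zero_iff.mp hl
    · rintro rfl; exact ⟨red_nil, rfl⟩
  rw [this, Finset.card_singleton]

lemma RW_one : (RW m 1).card ≤ 2 * m := by
  have h := Finset.card_le_card_of_injOn (f := fun w => w.getLast?)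
    (s := RW m 1) (t := Finset.univ.image some) ?_ ?_
  · rw [Finset.card_image_of_injective _ (Option.some_injective _), Finset.card_univ] at h
    simpa [Fintype.card_prod, mul_comm] using h
  · intro w hw
    obtain ⟨-, hl⟩ := mem_RW.mp hw
    obtain ⟨b, rfl⟩ := List.length_eq_one_iff.mp hl
    simp
  · intro w hw w' hw' hee
    obtain ⟨-, hl⟩ := mem_RW.mp hw
    obtain ⟨b, rfl⟩ := List.length_eq_one_iff.mp hl
    obtain ⟨-, hl'⟩ := mem_RW.mp hw'
    obtain ⟨b', rfl⟩ := List.length_eq_one_iff.mp hl'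
    simpa using hee

lemma RW_succ (k : ℕ) (hk : 1 ≤ k) : (RW m (k + 1)).card ≤ (2 * m - 1) * (RW m k).card := by
  refine Finset.card_le_mul_card_image_of_maps_to (f := fun w => w.dropLast)
    (t := RW m k) ?_ _ ?_
  · intro w hw
    obtain ⟨hred, hl⟩ := mem_RW.mp hw
    refine mem_RW.mpr ⟨?_, by rw [List.length_dropLast, hl]; omega⟩
    exact hred.prefix (List.dropLast_prefix w)
  · intro u hu
    obtain ⟨hured, hul⟩ := mem_RW.mp hu
    have hune : u ≠ [] := by
      intro h; rw [h] at hul; simp at hul; omega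
    set c := u.getLast hune with hc
    have h := Finset.card_le_card_of_injOn (f := fun w => w.getLast?)
      (s := {w ∈ RW m (k+1) | w.dropLast = u}) (t := (Finset.univ.erase (c.1, !c.2)).image some)
      ?_ ?_
    · rw [Finset.card_image_of_injective _ (Option.some_injective _),
        Finset.card_erase_of_mem (Finset.mem_univ _), Finset.card_univ] at h
      have : Fintype.card (Alp m) = 2 * m := by
        simp [Fintype.card_prod, mul_comm]
      rwa [this] at h
    · intro w hw
      rw [Finset.mem_coe, Finset.mem_filter] at hw
      obtain ⟨hw1, hw2⟩ := hw
      obtain ⟨hred, hl⟩ := mem_RW.mp hw1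
      have hwne : w ≠ [] := by intro h; rw [h] at hl; simp at hl
      have hrecon : u ++ [w.getLast hwne] = w := by
        rw [← hw2]; exact List.dropLast_append_getLast hwne
      rw [Finset.mem_coe, Finset.mem_image]
      refine ⟨w.getLast hwne, ?_, ?_⟩
      · rw [Finset.mem_erase]
        refine ⟨?_, Finset.mem_univ _⟩
        -- chain condition across the junction
        have hred' : Red (u ++ [w.getLast hwne]) := by rw [hrecon]; exact hred
        rw [Red, List.Chain', List.isChain_append] at hred'
        have := hred'.2.2 c (by rw [hc, List.getLast?_eq_getLast hune]; exact Option.mem_some_iff.mpr rfl)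
          (w.getLast hwne) (Option.mem_some_iff.mpr rfl)
        exact this
      · exact (List.getLast?_eq_getLast hwne).symm
    · intro w hw w' hw' hee
      rw [Finset.mem_coe, Finset.mem_filter] at hw hw'
      obtain ⟨hw1, hw2⟩ := hw
      obtain ⟨hw1', hw2'⟩ := hw'
      obtain ⟨-, hl⟩ := mem_RW.mp hw1
      obtain ⟨-, hl'⟩ := mem_RW.mp hw1'
      have hwne : w ≠ [] := by intro h; rw [h] at hl; simp at hl
      have hwne' : w' ≠ [] := by intro h; rw [h] at hl'; simp at hl'
      have e1 : w.dropLast ++ [w.getLast hwne] = w := List.dropLast_append_getLast hwne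
      have e2 : w'.dropLast ++ [w'.getLast hwne'] = w' := List.dropLast_append_getLast hwne'
      have hee' : w.getLast? = w'.getLast? := hee
      rw [List.getLast?_eq_getLast hwne, List.getLast?_eq_getLast hwne'] at hee'
      rw [← e1, ← e2, hw2, hw2']
      rw [Option.some_injective _ hee']

lemma RW_bound : ∀ k : ℕ, 1 ≤ k → (RW m k).card ≤ 2 * m * (2 * m - 1) ^ (k - 1) := by
  intro k
  induction k with
  | zero => intro h; omega
  | succ k ih =>
    intro _
    by_cases hk : 1 ≤ k
    · calc (RW m (k+1)).card ≤ (2 * m - 1) * (RW m k).card := RW_succ k hk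
        _ ≤ (2 * m - 1) * (2 * m * (2 * m - 1) ^ (k - 1)) :=
          Nat.mul_le_mul_left _ (ih hk)
        _ = 2 * m * (2 * m - 1) ^ (k + 1 - 1) := by
          rw [show k + 1 - 1 = (k - 1) + 1 by omega, pow_succ]
          ring
    · have hk0 : k = 0 := by omega
      subst hk0
      simpa using RW_one

/-- `nk R k` is at most the number of reduced words of length `k`. -/
lemma nk_le_RW (R : Set (FG m)) (k : ℕ) : nk R k ≤ (RW m k).card := by
  rw [nk, Set.ncard_eq_toFinset_card _ (finite_len R k)]
  apply Finset.card_le_card_of_injOn (f := FreeGroup.toWord)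
  · intro g hg
    rw [Finset.mem_coe, Set.Finite.mem_toFinset] at hg
    exact mem_RW.mpr ⟨red_toWord g, hg.2⟩
  · exact fun g _ g' _ h => FreeGroup.toWord_injective h

end Stmt5Aux
namespace Stmt5Aux

variable {m : ℕ}

lemma glen_zero_iff {g : FG m} : glen g = 0 ↔ g = 1 := by
  rw [glen, List.length_eq_zero_iff, FreeGroup.toWord_eq_nil_iff]

lemma nk_zero_of_one_not_mem {R : Set (FG m)} (h : 1 ∉ R) : nk R 0 = 0 := by
  rw [nk]
  convert Set.ncard_empty (FG m)
  ext g
  simp only [Set.mem_setOf_eq, Set.mem_empty_iff_false, iff_false, not_and]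
  intro hg hl
  exact h (glen_zero_iff.mp hl ▸ hg)

lemma nk_conv {A : PAut m} (hA : A.IsSpecial) (k : ℕ) :
    nk A.lang k = ∑ p ∈ Finset.HasAntidiagonal.antidiagonal k,
      nk (FreeGroup.mk '' W1 A) p.1 * nk (FreeGroup.mk '' W2 A) p.2 := by
  classical
  set R1 := FreeGroup.mk '' W1 A with hR1
  set R2 := FreeGroup.mk '' W2 A with hR2
  have hF := finite_len A.lang k
  have hrw : ∀ p ∈ Finset.HasAntidiagonal.antidiagonal k,
      nk R1 p.1 * nk R2 p.2
        = ((finite_len R1 p.1).toFinset ×ˢ (finite_len R2 p.2).toFinset).card := by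
    intro p _
    rw [Finset.card_product, nk, nk, Set.ncard_eq_toFinset_card _ (finite_len R1 p.1),
      Set.ncard_eq_toFinset_card _ (finite_len R2 p.2)]
  rw [nk, Set.ncard_eq_toFinset_card _ hF, Finset.sum_congr rfl hrw]
  have hdisj : ∀ p ∈ Finset.HasAntidiagonal.antidiagonal k, ∀ q ∈ Finset.HasAntidiagonal.antidiagonal k, p ≠ q →
      Disjoint ((finite_len R1 p.1).toFinset ×ˢ (finite_len R2 p.2).toFinset)
        ((finite_len R1 q.1).toFinset ×ˢ (finite_len R2 q.2).toFinset) := by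
    intro p _ q _ hpq
    rw [Finset.disjoint_left]
    intro a ha hb
    rw [Finset.mem_product, Set.Finite.mem_toFinset, Set.Finite.mem_toFinset] at ha hb
    exact hpq (Prod.ext (ha.1.2.symm.trans hb.1.2) (ha.2.2.symm.trans hb.2.2))
  rw [← Finset.card_biUnion hdisj]
  have key : ((Finset.HasAntidiagonal.antidiagonal k).biUnion fun p =>
      (finite_len R1 p.1).toFinset ×ˢ (finite_len R2 p.2).toFinset).card
      = hF.toFinset.card := by
    apply Finset.card_bij (i := fun a _ => a.1 * a.2)
    · intro a ha
      rw [Finset.mem_biUnion] at ha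
      obtain ⟨p, hp, hap⟩ := ha
      rw [Finset.mem_product, Set.Finite.mem_toFinset, Set.Finite.mem_toFinset] at hap
      obtain ⟨⟨h1, hl1⟩, ⟨h2, hl2⟩⟩ := hap
      rw [Set.Finite.mem_toFinset]
      refine ⟨(mul_mem_lang hA h1 h2).1, ?_⟩
      rw [(mul_mem_lang hA h1 h2).2.1, hl1, hl2]
      exact Finset.HasAntidiagonal.mem_antidiagonal.mp hp
    · intro a ha b hb hab
      rw [Finset.mem_biUnion] at ha hb
      obtain ⟨p, -, hap⟩ := ha
      obtain ⟨q, -, hbq⟩ := hb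
      rw [Finset.mem_product, Set.Finite.mem_toFinset, Set.Finite.mem_toFinset] at hap hbq
      have := prod_unique hA hap.1.1 hap.2.1 hbq.1.1 hbq.2.1 hab
      exact Prod.ext this.1 this.2
    · intro g hg
      rw [Set.Finite.mem_toFinset] at hg
      obtain ⟨hg1, hgl⟩ := hg
      have hmem : g ∈ {g : FG m | ∃ u ∈ R1, ∃ v ∈ R2, g = u * v} := by
        rw [hR1, hR2, ← lang_eq_prod hA]; exact hg1
      obtain ⟨u, hu, v, hv, rfl⟩ := hmem
      refine ⟨(u, v), ?_, rfl⟩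
      rw [Finset.mem_biUnion]
      refine ⟨(glen u, glen v), ?_, ?_⟩
      · rw [Finset.HasAntidiagonal.mem_antidiagonal]
        rw [← hgl, (mul_mem_lang hA hu hv).2.1]
      · rw [Finset.mem_product, Set.Finite.mem_toFinset, Set.Finite.mem_toFinset]
        exact ⟨⟨hu, rfl⟩, ⟨hv, rfl⟩⟩
  rw [key]

end Stmt5Aux
namespace Stmt5Aux

variable {m : ℕ}

lemma sphere_pos (hm : 2 ≤ m) (k : ℕ) : 0 < sphereCard m k := by
  rw [sphereCard]
  have h1 : (1:ℝ) ≤ 2 * (m:ℝ) - 1 := by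
    have : (2:ℝ) ≤ (m:ℝ) := by exact_mod_cast hm
    linarith
  split_ifs with h
  · norm_num
  · have : (0:ℝ) < 2 * (m:ℝ) := by positivity
    have h2 : (0:ℝ) < (2 * (m:ℝ) - 1) ^ (k-1) := by positivity
    positivity

lemma nk_le_sphere (hm : 2 ≤ m) (R : Set (FG m)) (k : ℕ) :
    (nk R k : ℝ) ≤ sphereCard m k := by
  have h := nk_le_RW R k
  rcases Nat.eq_zero_or_pos k with rfl | hk
  · rw [sphereCard, if_pos rfl]
    have : nk R 0 ≤ 1 := by rw [← RW_zero (m := m)]; exact h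
    exact_mod_cast this
  · have h2 := RW_bound (m := m) k hk
    have h3 : nk R k ≤ 2 * m * (2 * m - 1) ^ (k - 1) := h.trans h2
    rw [sphereCard, if_neg (by omega)]
    have hcast : ((2 * m - 1 : ℕ) : ℝ) = 2 * (m:ℝ) - 1 := by
      have : 1 ≤ 2 * m := by omega
      push_cast [this]
      ring
    calc (nk R k : ℝ) ≤ ((2 * m * (2 * m - 1) ^ (k - 1) : ℕ) : ℝ) := by exact_mod_cast h3
      _ = 2 * (m:ℝ) * (2 * (m:ℝ) - 1) ^ (k - 1) := by
        push_cast [hcast]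
        ring

lemma sphere_le (hm : 2 ≤ m) (k : ℕ) :
    sphereCard m k ≤ 2 * (m:ℝ) * (2 * (m:ℝ) - 1) ^ k := by
  have hq : (1:ℝ) ≤ 2 * (m:ℝ) - 1 := by
    have : (2:ℝ) ≤ (m:ℝ) := by exact_mod_cast hm
    linarith
  rw [sphereCard]
  split_ifs with h
  · subst h
    have : (4:ℝ) ≤ 2 * (m:ℝ) := by
      have : (2:ℝ) ≤ (m:ℝ) := by exact_mod_cast hm
      linarith
    simp only [pow_zero, mul_one]
    linarith
  · have := pow_le_pow_right₀ hq (Nat.sub_le k 1)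
    have h2 : (0:ℝ) ≤ 2 * (m:ℝ) := by positivity
    calc 2 * (m:ℝ) * (2 * (m:ℝ) - 1) ^ (k-1)
        ≤ 2 * (m:ℝ) * (2 * (m:ℝ) - 1) ^ k := by
          apply mul_le_mul_of_nonneg_left _ h2
          exact pow_le_pow_right₀ hq (Nat.sub_le k 1)
      _ = 2 * (m:ℝ) * (2 * (m:ℝ) - 1) ^ k := rfl

lemma fk_nonneg (R : Set (FG m)) (hm : 2 ≤ m) (k : ℕ) : 0 ≤ fk R k := by
  rw [fk]
  exact div_nonneg (Nat.cast_nonneg _) (sphere_pos hm k).le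

lemma fk_le_one (hm : 2 ≤ m) (R : Set (FG m)) (k : ℕ) : fk R k ≤ 1 := by
  rw [fk, div_le_one (sphere_pos hm k)]
  exact nk_le_sphere hm R k

lemma summable_norm_fk (hm : 2 ≤ m) (R : Set (FG m)) {t : ℝ} (ht : |t| < 1) :
    Summable fun k => ‖fk R k * t ^ k‖ := by
  apply Summable.of_nonneg_of_le (fun k => norm_nonneg _) (fun k => ?_)
    (summable_geometric_of_lt_one (abs_nonneg t) ht)
  rw [norm_mul, Real.norm_eq_abs, Real.norm_eq_abs, abs_pow]
  calc |fk R k| * |t| ^ k ≤ 1 * |t| ^ k := by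
        apply mul_le_mul_of_nonneg_right _ (by positivity)
        rw [abs_of_nonneg (fk_nonneg R hm k)]
        exact fk_le_one hm R k
    _ = |t| ^ k := one_mul _

lemma summable_norm_star (hm : 2 ≤ m) (R : Set (FG m)) {t : ℝ} (ht : |t| < 1) :
    Summable fun k => ‖(nk R k : ℝ) * (t / (2 * (m:ℝ) - 1)) ^ k‖ := by
  have hq : (1:ℝ) ≤ 2 * (m:ℝ) - 1 := by
    have : (2:ℝ) ≤ (m:ℝ) := by exact_mod_cast hm
    linarith
  have hq0 : (0:ℝ) < 2 * (m:ℝ) - 1 := by linarith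
  apply Summable.of_nonneg_of_le (fun k => norm_nonneg _) (fun k => ?_)
    ((summable_geometric_of_lt_one (abs_nonneg t) ht).mul_left (2 * (m:ℝ)))
  rw [norm_mul, Real.norm_eq_abs, Real.norm_eq_abs, abs_pow, abs_div,
    abs_of_nonneg (by exact_mod_cast Nat.cast_nonneg _ : (0:ℝ) ≤ (nk R k : ℝ)),
    abs_of_pos hq0, div_pow]
  rw [div_eq_mul_inv, ← mul_assoc]
  have h1 : (nk R k : ℝ) * |t| ^ k ≤ sphereCard m k * |t| ^ k :=
    mul_le_mul_of_nonneg_right (nk_le_sphere hm R k) (by positivity)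
  have h2 : sphereCard m k * |t| ^ k ≤ 2 * (m:ℝ) * (2 * (m:ℝ) - 1) ^ k * |t| ^ k :=
    mul_le_mul_of_nonneg_right (sphere_le hm k) (by positivity)
  have h3 : (0:ℝ) < ((2 * (m:ℝ) - 1) ^ k)⁻¹ := by positivity
  calc (nk R k : ℝ) * |t| ^ k * ((2 * (m:ℝ) - 1) ^ k)⁻¹
      ≤ 2 * (m:ℝ) * (2 * (m:ℝ) - 1) ^ k * |t| ^ k * ((2 * (m:ℝ) - 1) ^ k)⁻¹ :=
        mul_le_mul_of_nonneg_right (h1.trans h2) h3.le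
    _ = 2 * (m:ℝ) * |t| ^ k := by
        field_simp

lemma sphere_mul (hm : 2 ≤ m) {i j k : ℕ} (hi : 1 ≤ i) (hijk : i + j = k) :
    sphereCard m i * (2 * (m:ℝ) - 1) ^ j = sphereCard m k := by
  rw [sphereCard, sphereCard, if_neg (by omega), if_neg (by omega)]
  rw [mul_assoc, ← pow_add]
  congr 2
  omega

end Stmt5Aux
namespace Stmt5Aux

variable {m : ℕ}

lemma coeff_eq (hm : 2 ≤ m) {A : PAut m} (hA : A.IsSpecial) (t : ℝ) (k : ℕ) :
    fk A.lang k * t ^ k = ∑ p ∈ Finset.HasAntidiagonal.antidiagonal k,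
      (fk (FreeGroup.mk '' W1 A) p.1 * t ^ p.1) *
        ((nk (FreeGroup.mk '' W2 A) p.2 : ℝ) * (t / (2 * (m:ℝ) - 1)) ^ p.2) := by
  have hterm : ∀ p ∈ Finset.HasAntidiagonal.antidiagonal k,
      (fk (FreeGroup.mk '' W1 A) p.1 * t ^ p.1) *
        ((nk (FreeGroup.mk '' W2 A) p.2 : ℝ) * (t / (2 * (m:ℝ) - 1)) ^ p.2)
      = ((nk (FreeGroup.mk '' W1 A) p.1 : ℝ) * (nk (FreeGroup.mk '' W2 A) p.2 : ℝ))
          * (t ^ k / sphereCard m k) := by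
    intro p hp
    obtain ⟨i, j⟩ := p
    rw [Finset.HasAntidiagonal.mem_antidiagonal] at hp
    simp only at hp ⊢
    rcases Nat.eq_zero_or_pos i with rfl | hi
    · simp [fk, nk_zero_of_one_not_mem (one_not_mem_R1 hA)]
    · have hs := sphere_mul hm hi hp
      have hq0 : (0:ℝ) < 2 * (m:ℝ) - 1 := by
        have : (2:ℝ) ≤ (m:ℝ) := by exact_mod_cast hm
        linarith
      have hsi := sphere_pos hm i
      have hsk := sphere_pos hm k
      rw [fk, ← hs, ← hp, pow_add, div_pow]
      field_simp
  rw [Finset.sum_congr rfl hterm, ← Finset.sum_mul, fk, nk_conv hA k]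
  push_cast
  ring

lemma genFun_prod (hm : 2 ≤ m) {A : PAut m} (hA : A.IsSpecial) {t : ℝ}
    (ht : t ∈ Set.Ioo (-1:ℝ) 1) :
    genFun A.lang t
      = genFun (FreeGroup.mk '' W1 A) t * genFunStar (FreeGroup.mk '' W2 A) t := by
  have ht' : |t| < 1 := abs_lt.mpr ⟨ht.1, ht.2⟩
  rw [genFun, genFun, genFunStar,
    tsum_mul_tsum_eq_tsum_sum_antidiagonal_of_summable_norm
      (summable_norm_fk hm _ ht') (summable_norm_star hm _ ht')]
  exact tsum_congr (fun k => coeff_eq hm hA t k)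

end Stmt5Aux

/-- splitting of a saturated special automaton: `R = R₁ ∘ R₂`
unambiguously, with `R₁` special and `R₂` a special monoid, and the generating
function is multiplicative. -/
theorem stmt5 {m : ℕ} (hm : 2 ≤ m) (A : PAut m) (hA : A.IsSpecial)
    (hout : ∃ a s', A.step A.accept a = some s') :
    ∃ R₁ R₂ : Set (FG m),
      (∃ A₁ : PAut m, A₁.IsSpecial ∧ R₁ = A₁.lang) ∧
      (1 : FG m) ∉ R₁ ∧
      IsSpecialMonoid R₂ ∧ (1 : FG m) ∈ R₂ ∧
      (∀ u ∈ R₁, ∀ v ∈ R₂, glen (u * v) = glen u + glen v) ∧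
      A.lang = {g : FG m | ∃ u ∈ R₁, ∃ v ∈ R₂, g = u * v} ∧
      (∀ u ∈ R₁, ∀ v ∈ R₂, ∀ u' ∈ R₁, ∀ v' ∈ R₂,
        u * v = u' * v' → u = u' ∧ v = v') ∧
      (∀ t ∈ Set.Ioo (-1 : ℝ) 1,
        genFun A.lang t = genFun R₁ t * genFunStar R₂ t) := by
  obtain ⟨A₁, A₂, hA₁, hA₂, hw1, hw2⟩ := Stmt5Aux.main_aut A hA
  refine ⟨FreeGroup.mk '' Stmt5Aux.W1 A, FreeGroup.mk '' Stmt5Aux.W2 A,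
    ⟨A₁, hA₁, by rw [PAut.lang, hw1]⟩,
    Stmt5Aux.one_not_mem_R1 hA,
    ⟨A₂, hA₂, by rw [PAut.lang, hw2]⟩,
    Stmt5Aux.one_mem_R2,
    fun u hu v hv => (Stmt5Aux.mul_mem_lang hA hu hv).2.1,
    Stmt5Aux.lang_eq_prod hA,
    fun u hu v hv u' hu' v' hv' h => Stmt5Aux.prod_unique hA hu hv hu' hv' h,
    fun t ht => Stmt5Aux.genFun_prod hm hA ht⟩
end
end

section
/- Let M ⊆ F be a special monoid in the free group F of rank m ≥ 2. Then M is a submonoid of F, |uv| = |u| + |v| for all u, v ∈ M, and M is a free monoid: there exists a subset W ⊆ M ∖ {1} such that every element of M can be written in exactly one way as a product w₁w₂⋯w_n with n ≥ 0 and w_i ∈ W (and all such products are reduced: |w₁⋯w_n| = |w₁| + ⋯ + |w_n|). -/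
open Filter Set

noncomputable section

section Aux

namespace PAut

variable {m : ℕ}

theorem evalFrom_append (A : PAut m) (s : Fin A.n) (u v : List (Fin m × Bool)) :
    A.evalFrom s (u ++ v) = (A.evalFrom s u).bind (fun t => A.evalFrom t v) := by
  induction u generalizing s with
  | nil => simp [evalFrom]
  | cons a u ih =>
    simp only [List.cons_append, evalFrom]
    cases A.step s a with
    | none => rfl
    | some s' => exact ih s'

theorem chain_of_run (A : PAut m)
    (hf : ∀ s' a s, A.step s' a = some s → A.step s (a.1, !a.2) = none)
    {w : List (Fin m × Bool)} {s t : Fin A.n} (h : A.evalFrom s w = some t) :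
    w.Chain' (fun a b => ¬(a.1 = b.1 ∧ a.2 = !b.2)) := by
  induction w generalizing s with
  | nil => exact List.isChain_nil
  | cons a w ih =>
    simp only [evalFrom] at h
    cases hstep : A.step s a with
    | none => rw [hstep] at h; exact absurd h (by simp)
    | some s₁ =>
      rw [hstep] at h
      have hch := ih (s := s₁) h
      cases w with
      | nil => exact List.isChain_singleton a
      | cons b w' =>
        refine List.IsChain.cons_cons ?_ hch
        rintro ⟨h1, h2⟩
        have hb : b = (a.1, !a.2) := by
          apply Prod.ext
          · exact h1.symm
          · cases hb2 : b.2 <;> cases ha2 : a.2 <;> simp_all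
        have hnone := hf s a s₁ hstep
        simp only [evalFrom] at h
        rw [hb, hnone] at h
        exact absurd h (by simp)

theorem reduce_eq_self_of_chain {w : List (Fin m × Bool)}
    (h : w.Chain' (fun a b => ¬(a.1 = b.1 ∧ a.2 = !b.2))) :
    FreeGroup.reduce w = w := by
  induction w with
  | nil => rfl
  | cons a w ih =>
    have hw := ih h.tail
    rw [FreeGroup.reduce.cons, hw]
    cases w with
    | nil => rfl
    | cons b t =>
      have hab : ¬(a.1 = b.1 ∧ a.2 = !b.2) := (List.isChain_cons_cons.mp h).1
      simp only [if_neg hab]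

theorem toWord_mk_of_run (A : PAut m)
    (hf : ∀ s' a s, A.step s' a = some s → A.step s (a.1, !a.2) = none)
    {w : List (Fin m × Bool)} {s t : Fin A.n} (h : A.evalFrom s w = some t) :
    (FreeGroup.mk w).toWord = w := by
  rw [FreeGroup.toWord_mk]
  exact reduce_eq_self_of_chain (A.chain_of_run hf h)

theorem mem_lang_iff (A : PAut m)
    (hf : ∀ s' a s, A.step s' a = some s → A.step s (a.1, !a.2) = none)
    (g : FG m) :
    g ∈ A.lang ↔ A.evalFrom A.start (FreeGroup.toWord g) = some A.accept := by
  constructor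
  · rintro ⟨w, hw, rfl⟩
    rwa [A.toWord_mk_of_run hf hw]
  · intro h
    exact ⟨FreeGroup.toWord g, h, FreeGroup.mk_toWord⟩

/-- A first-return word: a nonempty accepted word none of whose proper nonempty
prefixes is accepted. -/
def Wword (A : PAut m) (w : List (Fin m × Bool)) : Prop :=
  w ≠ [] ∧ A.evalFrom A.start w = some A.accept ∧
    ∀ k, 0 < k → k < w.length → A.evalFrom A.start (w.take k) ≠ some A.accept

theorem flatten_accepted (A : PAut m) (hstart : A.start = A.accept) :
    ∀ ws : List (List (Fin m × Bool)),
      (∀ u ∈ ws, A.evalFrom A.start u = some A.accept) →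
      A.evalFrom A.start ws.flatten = some A.accept := by
  intro ws
  induction ws with
  | nil => intro _; simp [evalFrom, hstart]
  | cons a ws ih =>
    intro h
    rw [List.flatten_cons, A.evalFrom_append, h a (List.mem_cons_self),
      Option.bind_some]
    have := ih fun u hu => h u (List.mem_cons_of_mem a hu)
    rwa [hstart] at this

theorem exists_fact (A : PAut m) (hstart : A.start = A.accept) :
    ∀ N (w : List (Fin m × Bool)), w.length ≤ N →
      A.evalFrom A.start w = some A.accept →
      ∃ ws : List (List (Fin m × Bool)), (∀ u ∈ ws, A.Wword u) ∧ ws.flatten = w := by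
  intro N
  induction N with
  | zero =>
    intro w hw _
    have : w = [] := List.eq_nil_of_length_eq_zero (Nat.le_zero.mp hw)
    exact ⟨[], by simp, by simp [this]⟩
  | succ N ih =>
    intro w hw hacc
    rcases eq_or_ne w [] with rfl | hne
    · exact ⟨[], by simp, by simp⟩
    · have hlen : 0 < w.length := List.length_pos_iff.mpr hne
      have hP : ∃ k, 0 < k ∧ A.evalFrom A.start (w.take k) = some A.accept :=
        ⟨w.length, hlen, by simpa using hacc⟩
      classical
      set n := Nat.find hP with hn
      obtain ⟨hn0, hnacc⟩ := Nat.find_spec hP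
      have hnle : n ≤ w.length := Nat.find_min' hP ⟨hlen, by simpa using hacc⟩
      set p := w.take n with hp
      set r := w.drop n with hr
      have hpr : p ++ r = w := List.take_append_drop n w
      have hplen : p.length = n := by
        simp [hp, List.length_take, Nat.min_eq_left hnle]
      have hpW : A.Wword p := by
        refine ⟨?_, hnacc, ?_⟩
        · intro h0
          rw [h0] at hplen
          simp at hplen
          omega
        · intro k hk0 hkn
          rw [hplen] at hkn
          have : p.take k = w.take k := by
            rw [hp, List.take_take, Nat.min_eq_left (le_of_lt hkn)]
          rw [this]
          intro hcon
          exact Nat.find_min hP hkn ⟨hk0, hcon⟩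
      have hracc : A.evalFrom A.start r = some A.accept := by
        have := hacc
        rw [← hpr, A.evalFrom_append, hnacc, Option.bind_some] at this
        rw [hstart]
        exact this
      have hrlen : r.length ≤ N := by
        have : r.length = w.length - n := by simp [hr]
        omega
      obtain ⟨ws, hws1, hws2⟩ := ih r hrlen hracc
      exact ⟨p :: ws, by
        intro u hu
        rcases List.mem_cons.mp hu with rfl | hu
        · exact hpW
        · exact hws1 u hu, by rw [List.flatten_cons, hws2, hpr]⟩

theorem fact_unique (A : PAut m) :
    ∀ ws ws' : List (List (Fin m × Bool)),
      (∀ u ∈ ws, A.Wword u) → (∀ u ∈ ws', A.Wword u) →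
      ws.flatten = ws'.flatten → ws = ws' := by
  intro ws
  induction ws with
  | nil =>
    intro ws' _ h' hflat
    cases ws' with
    | nil => rfl
    | cons a l =>
      exfalso
      have ha := (h' a (List.mem_cons_self)).1
      have : a ++ l.flatten = [] := by simpa using hflat.symm
      exact ha (List.append_eq_nil_iff.mp this).1
  | cons a l ih =>
    intro ws' h h' hflat
    cases ws' with
    | nil =>
      exfalso
      have ha := (h a (List.mem_cons_self)).1
      have : a ++ l.flatten = [] := by simpa using hflat
      exact ha (List.append_eq_nil_iff.mp this).1
    | cons a' l' =>
      have hW : A.Wword a := h a (List.mem_cons_self)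
      have hW' : A.Wword a' := h' a' (List.mem_cons_self)
      simp only [List.flatten_cons] at hflat
      have key : ∀ (b b' : List (Fin m × Bool)) (u u' : List (Fin m × Bool)),
          A.Wword b → A.Wword b' → b ++ u = b' ++ u' → b.length ≤ b'.length →
          b.length = b'.length := by
        intro b b' u u' hb hb' heq hle
        by_contra hne
        have hlt : b.length < b'.length := lt_of_le_of_ne hle hne
        have htake : b'.take b.length = b := by
          have h1 : (b' ++ u').take b.length = b'.take b.length :=
            List.take_append_of_le_length (le_of_lt hlt)
          have h2 : (b ++ u).take b.length = b := by
            simpa using List.take_append_of_le_length (le_refl b.length)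
          rw [← heq, h2] at h1
          exact h1.symm
        have hb0 : 0 < b.length := List.length_pos_iff.mpr hb.1
        have hbacc := hb.2.1
        rw [← htake] at hbacc
        exact hb'.2.2 b.length hb0 hlt hbacc
      have hlen : a.length = a'.length := by
        rcases le_total a.length a'.length with hle | hle
        · exact key a a' l.flatten l'.flatten hW hW' hflat hle
        · exact (key a' a l'.flatten l.flatten hW' hW hflat.symm hle).symm
      have haa : a = a' := by
        have h1 : (a ++ l.flatten).take a.length = a := by
          simpa using List.take_append_of_le_length (le_refl a.length)
        have h2 : (a' ++ l'.flatten).take a'.length = a' := by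
          simpa using List.take_append_of_le_length (le_refl a'.length)
        rw [← h1, hflat, hlen, h2]
      subst haa
      have hl : l.flatten = l'.flatten := List.append_cancel_left hflat
      rw [ih l' (fun u hu => h u (List.mem_cons_of_mem a hu))
        (fun u hu => h' u (List.mem_cons_of_mem a hu)) hl]

theorem prod_map_mk (ws : List (List (Fin m × Bool))) :
    (ws.map (fun w => FreeGroup.mk w)).prod = FreeGroup.mk ws.flatten := by
  induction ws with
  | nil => simp [FreeGroup.one_eq_mk]
  | cons a ws ih => rw [List.map_cons, List.prod_cons, ih, FreeGroup.mul_mk, List.flatten_cons]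

end PAut

end Aux

/-- a special monoid is a submonoid of `F` with additive lengths which
is free: there is a set `W` of generators such that every element factors uniquely
as a (reduced) product of elements of `W`. -/


theorem stmt6 {m : ℕ} (hm : 2 ≤ m) (M : Set (FG m)) (hM : IsSpecialMonoid M) :
    (1 : FG m) ∈ M ∧
    (∀ u ∈ M, ∀ v ∈ M, u * v ∈ M) ∧
    (∀ u ∈ M, ∀ v ∈ M, glen (u * v) = glen u + glen v) ∧
    ∃ W : Set (FG m), W ⊆ M ∧ (1 : FG m) ∉ W ∧
      (∀ g ∈ M, ∃! l : List (FG m), (∀ w ∈ l, w ∈ W) ∧ l.prod = g) ∧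
      (∀ l : List (FG m), (∀ w ∈ l, w ∈ W) → glen l.prod = (l.map glen).sum) := by
  obtain ⟨A, ⟨hstart, _, _, _, hf⟩, rfl⟩ := hM
  have hmem := A.mem_lang_iff hf
  -- membership of 1
  have h1 : (1 : FG m) ∈ A.lang := by
    rw [hmem]
    simp [FreeGroup.toWord_one, PAut.evalFrom, hstart]
  -- key: words of products
  have hmulword : ∀ u ∈ A.lang, ∀ v ∈ A.lang,
      FreeGroup.toWord (u * v) = FreeGroup.toWord u ++ FreeGroup.toWord v ∧
      u * v ∈ A.lang := by
    intro u hu v hv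
    rw [hmem] at hu hv
    have hrun : A.evalFrom A.start (FreeGroup.toWord u ++ FreeGroup.toWord v)
        = some A.accept := by
      rw [A.evalFrom_append, hu, Option.bind_some]
      have hv' := hv
      rwa [hstart] at hv'
    have huv : u * v = FreeGroup.mk (FreeGroup.toWord u ++ FreeGroup.toWord v) := by
      rw [← FreeGroup.mul_mk, FreeGroup.mk_toWord, FreeGroup.mk_toWord]
    constructor
    · rw [huv, A.toWord_mk_of_run hf hrun]
    · rw [hmem, huv, A.toWord_mk_of_run hf hrun]
      exact hrun
  refine ⟨h1, fun u hu v hv => (hmulword u hu v hv).2, fun u hu v hv => ?_, ?_⟩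
  · unfold glen
    rw [(hmulword u hu v hv).1, List.length_append]
  · refine ⟨{g : FG m | A.Wword (FreeGroup.toWord g)}, ?_, ?_, ?_, ?_⟩
    · intro g hg
      rw [hmem]
      exact hg.2.1
    · intro h
      exact h.1 (by simp [FreeGroup.toWord_one])
    · -- unique factorization
      intro g hg
      rw [hmem] at hg
      obtain ⟨ws, hws1, hws2⟩ :=
        A.exists_fact hstart (FreeGroup.toWord g).length (FreeGroup.toWord g) le_rfl hg
      have hkey : ∀ l : List (FG m),
          (∀ w ∈ l, A.Wword (FreeGroup.toWord w)) → l.prod = g →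
          l.map FreeGroup.toWord = ws := by
        intro l hl hprod
        have hwsl : ∀ u ∈ l.map FreeGroup.toWord, A.Wword u := by
          intro u hu
          obtain ⟨x, hx, rfl⟩ := List.mem_map.mp hu
          exact hl x hx
        apply A.fact_unique _ _ hwsl hws1
        rw [hws2]
        -- flatten (l.map toWord) = toWord g
        have h1 : (l.map FreeGroup.toWord).flatten.length ≤
            (l.map FreeGroup.toWord).flatten.length := le_rfl
        have hrun : A.evalFrom A.start (l.map FreeGroup.toWord).flatten
            = some A.accept :=
          A.flatten_accepted hstart _ (fun u hu => (hwsl u hu).2.1)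
        have hcomp : ((fun w => FreeGroup.mk w) ∘ (FreeGroup.toWord (α := Fin m)))
            = id := funext fun x => FreeGroup.mk_toWord
        have : g = FreeGroup.mk (l.map FreeGroup.toWord).flatten := by
          rw [← hprod, ← PAut.prod_map_mk, List.map_map, hcomp, List.map_id]
        rw [this, A.toWord_mk_of_run hf hrun]
      refine ⟨ws.map (fun w => FreeGroup.mk w), ⟨?_, ?_⟩, ?_⟩
      · intro w hw
        obtain ⟨u, hu, rfl⟩ := List.mem_map.mp hw
        have hW := hws1 u hu
        show A.Wword (FreeGroup.toWord (FreeGroup.mk u))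
        rwa [A.toWord_mk_of_run hf hW.2.1]
      · rw [PAut.prod_map_mk, hws2, FreeGroup.mk_toWord]
      · rintro l ⟨hl1, hl2⟩
        have := hkey l hl1 hl2
        have hcomp : ((fun w => FreeGroup.mk w) ∘ (FreeGroup.toWord (α := Fin m)))
            = id := funext fun x => FreeGroup.mk_toWord
        rw [← this, List.map_map, hcomp, List.map_id]
    · -- lengths additive on products of W-elements
      intro l hl
      induction l with
      | nil => simp [glen, FreeGroup.toWord_one]
      | cons a l ih =>
        have haM : a ∈ A.lang := by
          rw [hmem]; exact (hl a (List.mem_cons_self)).2.1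
        have hlW : ∀ w ∈ l, A.Wword (FreeGroup.toWord w) :=
          fun w hw => hl w (List.mem_cons_of_mem a hw)
        have hlM : l.prod ∈ A.lang := by
          rw [hmem]
          have hrun : A.evalFrom A.start (l.map FreeGroup.toWord).flatten
              = some A.accept :=
            A.flatten_accepted hstart _ (fun u hu => by
              obtain ⟨x, hx, rfl⟩ := List.mem_map.mp hu
              exact (hlW x hx).2.1)
          have hcomp : ((fun w => FreeGroup.mk w) ∘ (FreeGroup.toWord (α := Fin m)))
              = id := funext fun x => FreeGroup.mk_toWord
          have : l.prod = FreeGroup.mk (l.map FreeGroup.toWord).flatten := by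
            rw [← PAut.prod_map_mk, List.map_map, hcomp, List.map_id]
          rw [this, A.toWord_mk_of_run hf hrun]
          exact hrun
        rw [List.prod_cons, List.map_cons, List.sum_cons,
          (by
            unfold glen
            rw [(hmulword a haM l.prod hlM).1, List.length_append] :
            glen (a * l.prod) = glen a + glen l.prod), ih hlW]
end
end

section
/- Let A be a special automaton over the free group F of rank m ≥ 2 with final state z₀, and let A₂ be the automaton obtained by restricting A to the set of states reachable from z₀, with z₀ as both initial and final state. If A₂ is not Σ-complete (i.e. there is a state s of A₂, of type x, and a label y ∈ Σ with y ≠ x^{-1}, such that δ(s,y) is undefined), then L(A) is exponentially λ-measurable: there exists δ ∈ (0,1) such that f_k(L(A)) < δ^k for all sufficiently large k. -/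
open Filter Set

noncomputable section

open Finset

namespace Stmt7Aux

variable {m : ℕ}

/-- Admissible words of length `k` whose first letter is not `f` and in which
no letter is followed by its inverse. -/
def adm (m : ℕ) : ℕ → (Fin m × Bool) → Finset (List (Fin m × Bool))
  | 0, _ => {[]}
  | k + 1, f => (Finset.univ.erase f).biUnion fun a => (adm m k (a.1, !a.2)).image (a :: ·)

lemma mem_adm : ∀ {k : ℕ} {f : Fin m × Bool} {w : List (Fin m × Bool)},
    w ∈ adm m k f ↔ w.length = k ∧ (∀ a ∈ w.head?, a ≠ f) ∧
      List.Chain' (fun a b : Fin m × Bool => b ≠ (a.1, !a.2)) w := by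
  intro k
  induction k with
  | zero =>
    intro f w
    simp only [adm, Finset.mem_singleton, List.length_eq_zero_iff]
    constructor
    · rintro rfl; simp [List.Chain']
    · rintro ⟨rfl, -, -⟩; rfl
  | succ k ih =>
    intro f w
    simp only [adm, Finset.mem_biUnion, Finset.mem_erase, Finset.mem_univ, and_true,
      Finset.mem_image]
    constructor
    · rintro ⟨a, haf, v, hv, rfl⟩
      obtain ⟨hl, hh, hc⟩ := ih.1 hv
      refine ⟨by simp [hl], ?_, ?_⟩
      · intro x hx
        simp only [List.head?_cons, Option.mem_def, Option.some.injEq] at hx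
        subst hx; exact haf
      · exact List.isChain_cons.2 ⟨hh, hc⟩
    · rintro ⟨hl, hh, hc⟩
      cases w with
      | nil => simp at hl
      | cons a v =>
        simp only [List.Chain', List.isChain_cons] at hc
        exact ⟨a, hh a rfl, v, ih.2 ⟨by simpa using hl, hc.1, hc.2⟩, rfl⟩

lemma card_adm_le : ∀ (k : ℕ) (f : Fin m × Bool), (adm m k f).card ≤ (2 * m - 1) ^ k := by
  intro k
  induction k with
  | zero => intro f; simp [adm]
  | succ k ih =>
    intro f
    rw [adm]
    refine le_trans Finset.card_biUnion_le ?_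
    refine le_trans (Finset.sum_le_sum fun a _ => le_trans Finset.card_image_le (ih _)) ?_
    rw [Finset.sum_const, smul_eq_mul]
    have hcard : (Finset.univ.erase f).card = 2 * m - 1 := by
      rw [Finset.card_erase_of_mem (Finset.mem_univ f), Finset.card_univ]
      simp [Fintype.card_prod]
      omega
    rw [hcard, pow_succ, mul_comm]

/-- Realizable words of length `k` from state `t`. -/
def Pfin (A : PAut m) : ℕ → Fin A.n → Finset (List (Fin m × Bool))
  | 0, _ => {[]}
  | k + 1, t => Finset.univ.biUnion fun a =>
      (A.step t a).elim ∅ fun t' => (Pfin A k t').image (a :: ·)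

lemma mem_Pfin {A : PAut m} : ∀ {k : ℕ} {t : Fin A.n} {w : List (Fin m × Bool)},
    w ∈ Pfin A k t ↔ w.length = k ∧ (A.evalFrom t w).isSome := by
  intro k
  induction k with
  | zero =>
    intro t w
    simp only [Pfin, Finset.mem_singleton, List.length_eq_zero_iff]
    constructor
    · rintro rfl; exact ⟨rfl, by simp [PAut.evalFrom]⟩
    · rintro ⟨rfl, -⟩; rfl
  | succ k ih =>
    intro t w
    simp only [Pfin, Finset.mem_biUnion, Finset.mem_univ, true_and]
    constructor
    · rintro ⟨a, ha⟩
      cases h : A.step t a with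
      | none => rw [h] at ha; simp at ha
      | some t' =>
        try rw [h] at ha
        simp only [Option.elim, Finset.mem_image] at ha
        obtain ⟨v, hv, rfl⟩ := ha
        obtain ⟨hl, hs⟩ := ih.1 hv
        exact ⟨by simp [hl], by simpa [PAut.evalFrom, h] using hs⟩
    · rintro ⟨hl, hs⟩
      cases w with
      | nil => simp at hl
      | cons a v =>
        refine ⟨a, ?_⟩
        cases h : A.step t a with
        | none => simp [PAut.evalFrom, h] at hs
        | some t' =>
          try rw [h]
          simp only [Option.elim, Finset.mem_image]
          exact ⟨v, ih.2 ⟨by simpa using hl, by simpa [PAut.evalFrom, h] using hs⟩, rfl⟩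

lemma evalFrom_append (A : PAut m) : ∀ (u v : List (Fin m × Bool)) (t : Fin A.n),
    A.evalFrom t (u ++ v) = (A.evalFrom t u).bind fun s => A.evalFrom s v := by
  intro u
  induction u with
  | nil => intro v t; simp [PAut.evalFrom]
  | cons a u ih =>
    intro v t
    cases h : A.step t a with
    | none => simp [PAut.evalFrom, h]
    | some t' => simp [PAut.evalFrom, h, ih]

lemma evalFrom_typed (A : PAut m) : ∀ {w : List (Fin m × Bool)} {t s : Fin A.n},
    A.evalFrom t w = some s → w ≠ [] →
    ∃ a, w.getLast? = some a ∧ ∃ s', A.step s' a = some s := by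
  intro w
  induction w with
  | nil => intro t s _ h; exact absurd rfl h
  | cons a v ih =>
    intro t s hev _
    cases h : A.step t a with
    | none => simp only [PAut.evalFrom, h] at hev; cases hev
    | some t' =>
      simp only [PAut.evalFrom, h] at hev
      cases v with
      | nil =>
        simp only [PAut.evalFrom, Option.some.injEq] at hev
        exact ⟨a, rfl, t, by rw [h, hev]⟩
      | cons c u =>
        obtain ⟨x, hx, hs'⟩ := ih hev (by simp)
        exact ⟨x, by rw [List.getLast?_cons_cons]; exact hx, hs'⟩

lemma Pfin_subset_adm (A : PAut m)
    (hf : ∀ s' a s, A.step s' a = some s → A.step s (a.1, !a.2) = none) :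
    ∀ (k : ℕ) {t : Fin A.n} {a : Fin m × Bool}, (∃ s', A.step s' a = some t) →
      Pfin A k t ⊆ adm m k (a.1, !a.2) := by
  intro k
  induction k with
  | zero =>
    intro t a _ w hw
    obtain ⟨hl, -⟩ := mem_Pfin.1 hw
    rw [List.eq_nil_of_length_eq_zero hl, mem_adm]
    simp [List.Chain']
  | succ k ih =>
    rintro t a ⟨s', hs'⟩ w hw
    simp only [Pfin, Finset.mem_biUnion, Finset.mem_univ, true_and] at hw
    obtain ⟨a', ha'⟩ := hw
    cases h : A.step t a' with
    | none => rw [h] at ha'; simp at ha'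
    | some t' =>
      rw [h] at ha'
      simp only [Option.elim, Finset.mem_image] at ha'
      obtain ⟨v, hv, rfl⟩ := ha'
      simp only [adm, Finset.mem_biUnion, Finset.mem_erase, Finset.mem_univ, and_true,
        Finset.mem_image]
      refine ⟨a', ?_, v, ih ⟨t, h⟩ hv, rfl⟩
      intro hc
      rw [hc] at h
      rw [hf s' a t hs'] at h
      cases h

lemma Pfin_comp_subset (A : PAut m) (i j : ℕ) (t : Fin A.n) :
    Pfin A (i + j) t ⊆ (Pfin A i t).biUnion fun u =>
      (A.evalFrom t u).elim ∅ fun t' => (Pfin A j t').image (u ++ ·) := by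
  intro w hw
  obtain ⟨hl, hs⟩ := mem_Pfin.1 hw
  rw [Finset.mem_biUnion]
  have hsplit : w.take i ++ w.drop i = w := List.take_append_drop i w
  rw [← hsplit, evalFrom_append] at hs
  cases h : A.evalFrom t (w.take i) with
  | none => rw [h] at hs; simp at hs
  | some t' =>
    rw [h] at hs
    replace hs : (A.evalFrom t' (w.drop i)).isSome := hs
    refine ⟨w.take i, mem_Pfin.2 ⟨by simp [hl], by simp [h]⟩, ?_⟩
    rw [h]
    simp only [Option.elim, Finset.mem_image]
    exact ⟨w.drop i, mem_Pfin.2 ⟨by simp [hl], hs⟩, hsplit⟩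

lemma reduce_eq_self {α : Type*} [DecidableEq α] {w : List (α × Bool)}
    (h : List.Chain' (fun a c : α × Bool => c ≠ (a.1, !a.2)) w) : FreeGroup.reduce w = w := by
  induction w with
  | nil => rfl
  | cons a v ih =>
    obtain ⟨h1, h2⟩ := List.isChain_cons.1 h
    rw [FreeGroup.reduce.cons, ih h2]
    cases v with
    | nil => rfl
    | cons c u =>
      have hc : c ≠ (a.1, !a.2) := h1 c rfl
      have : ¬(a.1 = c.1 ∧ a.2 = !c.2) := by
        rintro ⟨e1, e2⟩
        exact hc (Prod.ext e1.symm (by rw [e2, Bool.not_not]))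
      simp only [this, if_false]

lemma chain'_cons_replicate (r : ℕ) (b : Fin m × Bool) :
    List.Chain' (fun a c : Fin m × Bool => c ≠ (a.1, !a.2)) (b :: List.replicate r b) := by
  have hb : b ≠ (b.1, !b.2) := by
    intro h
    have := congrArg Prod.snd h
    simp at this
  induction r with
  | zero => simp [List.Chain']
  | succ r ih =>
    rw [List.replicate_succ]
    exact List.isChain_cons_cons.2 ⟨hb, ih⟩

end Stmt7Aux


/-- if the second-type automaton `A₂` (the restriction of a special
automaton `A` to the states reachable from the final state) is not `Σ`-complete,
then `L(A)` is exponentially λ-measurable. -/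
theorem stmt7 {m : ℕ} (hm : 2 ≤ m) (A : PAut m) (hA : A.IsSpecial)
    (hnc : ∃ s : Fin A.n, (∃ w, A.evalFrom A.accept w = some s) ∧
      ∃ a, (∃ s', A.step s' a = some s) ∧
        ∃ b, b ≠ (a.1, !a.2) ∧ A.step s b = none) :
    ExpNegligible A.lang := by
  classical
  obtain ⟨hne, hnostart, hd0, hd, he, hf⟩ := hA
  obtain ⟨s, ⟨w₂, hw₂⟩, a₀, ⟨s₀', hs₀⟩, b, hbne, hbnone⟩ := hnc
  set K : ℕ := 2 * m - 1 with hKdef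
  have hK3 : 3 ≤ K := by omega
  choose wTo hwTo using hd
  set u : Fin A.n → List (Fin m × Bool) := fun t => wTo t ++ w₂ with hudef
  have hu : ∀ t, A.evalFrom t (u t) = some s := by
    intro t
    rw [hudef]
    rw [Stmt7Aux.evalFrom_append, hwTo t]
    exact hw₂
  set N : ℕ := (Finset.univ.sup fun t => (u t).length) + 1 with hNdef
  have hNt : ∀ t, (u t).length + 1 ≤ N :=
    fun t => Nat.succ_le_succ (Finset.le_sup (f := fun t => (u t).length) (Finset.mem_univ t))
  have hN1 : 1 ≤ N := Nat.le_add_left 1 _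
  -- key counting bound at typed states
  have key : ∀ t a', (∃ s', A.step s' a' = some t) →
      (Stmt7Aux.Pfin A N t).card < K ^ N := by
    rintro t a' ⟨st', hst'⟩
    set w0 : List (Fin m × Bool) := u t ++ b :: List.replicate (N - 1 - (u t).length) b
      with hw0
    have hw0len : w0.length = N := by
      have := hNt t
      simp only [hw0, List.length_append, List.length_cons, List.length_replicate]
      omega
    have hw0not : w0 ∉ Stmt7Aux.Pfin A N t := by
      intro hmem
      obtain ⟨-, hsome⟩ := Stmt7Aux.mem_Pfin.1 hmem
      rw [hw0, Stmt7Aux.evalFrom_append, hu t] at hsome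
      simp [PAut.evalFrom, hbnone] at hsome
    have humem : u t ∈ Stmt7Aux.Pfin A ((u t).length) t :=
      Stmt7Aux.mem_Pfin.2 ⟨rfl, by rw [hu t]; rfl⟩
    obtain ⟨-, huh, huc⟩ :=
      Stmt7Aux.mem_adm.1 (Stmt7Aux.Pfin_subset_adm A hf _ ⟨st', hst'⟩ humem)
    have hw0adm : w0 ∈ Stmt7Aux.adm m N (a'.1, !a'.2) := by
      rw [Stmt7Aux.mem_adm]
      refine ⟨hw0len, ?_, ?_⟩
      · intro x hx
        rw [hw0] at hx
        cases hcu : u t with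
        | nil =>
          rw [hcu] at hx
          simp only [List.nil_append, List.head?_cons, Option.mem_def,
            Option.some.injEq] at hx
          subst hx
          have hts : t = s := by
            have h0 := hu t
            rw [hcu] at h0
            simpa [PAut.evalFrom] using h0
          have haa : a' = a₀ := he st' a' s₀' a₀ s (hts ▸ hst') hs₀
          rw [haa]
          exact hbne
        | cons c v =>
          rw [hcu] at hx
          simp only [List.cons_append, List.head?_cons, Option.mem_def,
            Option.some.injEq] at hx
          subst hx
          apply huh
          rw [hcu]
          rfl
      · rw [hw0]
        refine List.isChain_append.2 ⟨huc, Stmt7Aux.chain'_cons_replicate _ b, ?_⟩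
        intro x hxl y hyh
        simp only [List.head?_cons, Option.mem_def, Option.some.injEq] at hyh
        subst hyh
        have hune : u t ≠ [] := by
          intro h0
          rw [h0] at hxl
          simp at hxl
        obtain ⟨x', hx'last, s'', hx'step⟩ := Stmt7Aux.evalFrom_typed A (hu t) hune
        rw [Option.mem_def] at hxl
        rw [hxl] at hx'last
        have hxx : x = x' := Option.some.inj hx'last
        have hxa : x' = a₀ := he s'' x' s₀' a₀ s hx'step hs₀
        rw [hxx, hxa]
        exact hbne
    have hss : Stmt7Aux.Pfin A N t ⊂ Stmt7Aux.adm m N (a'.1, !a'.2) :=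
      Finset.ssubset_iff_subset_ne.2 ⟨Stmt7Aux.Pfin_subset_adm A hf N ⟨st', hst'⟩,
        fun heq => hw0not (by rw [heq]; exact hw0adm)⟩
    exact lt_of_lt_of_le (Finset.card_lt_card hss) (Stmt7Aux.card_adm_le N _)
  -- main recursion
  have main : ∀ q j t, (∃ a' s', A.step s' a' = some t) →
      (Stmt7Aux.Pfin A (q * N + j) t).card ≤ (K ^ N - 1) ^ q * K ^ j := by
    intro q
    induction q with
    | zero =>
      rintro j t ⟨a', ht⟩
      simpa using le_trans
        (Finset.card_le_card (Stmt7Aux.Pfin_subset_adm A hf j ht))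
        (Stmt7Aux.card_adm_le j _)
    | succ q ih =>
      rintro j t ht
      have heq : (q + 1) * N + j = N + (q * N + j) := by ring
      rw [heq]
      refine le_trans (Finset.card_le_card
        (Stmt7Aux.Pfin_comp_subset A N (q * N + j) t)) ?_
      refine le_trans Finset.card_biUnion_le ?_
      have hb : ∀ u' ∈ Stmt7Aux.Pfin A N t,
          ((A.evalFrom t u').elim ∅ fun t' =>
            (Stmt7Aux.Pfin A (q * N + j) t').image (u' ++ ·)).card
            ≤ (K ^ N - 1) ^ q * K ^ j := by
        intro u' hu'
        obtain ⟨hul, hus⟩ := Stmt7Aux.mem_Pfin.1 hu'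
        cases h : A.evalFrom t u' with
        | none => simp
        | some t' =>
          refine le_trans Finset.card_image_le (ih j t' ?_)
          have hne' : u' ≠ [] := by
            intro h0
            rw [h0] at hul
            simp at hul
          obtain ⟨a', -, s'', hstep⟩ := Stmt7Aux.evalFrom_typed A h hne'
          exact ⟨a', s'', hstep⟩
      refine le_trans (Finset.sum_le_sum hb) ?_
      rw [Finset.sum_const, smul_eq_mul]
      obtain ⟨a', ht'⟩ := ht
      have hcard := key t a' ht'
      calc (Stmt7Aux.Pfin A N t).card * ((K ^ N - 1) ^ q * K ^ j)
          ≤ (K ^ N - 1) * ((K ^ N - 1) ^ q * K ^ j) :=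
            Nat.mul_le_mul (by omega) le_rfl
        _ = (K ^ N - 1) ^ (q + 1) * K ^ j := by ring
  -- bound from the start state
  have hstart : ∀ r, (Stmt7Aux.Pfin A (r + 1) A.start).card
      ≤ 2 * m * ((K ^ N - 1) ^ (r / N) * K ^ (r % N)) := by
    intro r
    have hsub : Stmt7Aux.Pfin A (r + 1) A.start ⊆ Finset.univ.biUnion fun a =>
        (A.step A.start a).elim ∅ fun t' => (Stmt7Aux.Pfin A r t').image (a :: ·) := by
      rw [Stmt7Aux.Pfin]
    refine le_trans (Finset.card_le_card hsub) ?_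
    refine le_trans Finset.card_biUnion_le ?_
    have hb : ∀ a ∈ (Finset.univ : Finset (Fin m × Bool)),
        ((A.step A.start a).elim ∅ fun t' =>
          (Stmt7Aux.Pfin A r t').image (a :: ·)).card
          ≤ (K ^ N - 1) ^ (r / N) * K ^ (r % N) := by
      intro a _
      cases h : A.step A.start a with
      | none => simp
      | some t' =>
        refine le_trans Finset.card_image_le ?_
        have hr : r / N * N + r % N = r := by
          rw [Nat.mul_comm]
          exact Nat.div_add_mod r N
        have hmb := main (r / N) (r % N) t' ⟨a, A.start, h⟩
        rw [hr] at hmb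
        exact hmb
    refine le_trans (Finset.sum_le_sum hb) ?_
    rw [Finset.sum_const, smul_eq_mul, Finset.card_univ]
    have hcu : Fintype.card (Fin m × Bool) = 2 * m := by
      rw [Fintype.card_prod, Fintype.card_fin, Fintype.card_bool]
      omega
    rw [hcu]
  -- accepted elements of length k inject into realizable words
  have hchain : ∀ w : List (Fin m × Bool), (A.evalFrom A.start w).isSome →
      List.Chain' (fun a c : Fin m × Bool => c ≠ (a.1, !a.2)) w := by
    intro w hw
    cases w with
    | nil => simp [List.Chain']
    | cons c v =>
      cases h : A.step A.start c with
      | none => simp [PAut.evalFrom, h] at hw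
      | some t' =>
        have hv : (A.evalFrom t' v).isSome := by simpa [PAut.evalFrom, h] using hw
        obtain ⟨-, hh, hc⟩ := Stmt7Aux.mem_adm.1
          (Stmt7Aux.Pfin_subset_adm A hf v.length ⟨A.start, h⟩
            (Stmt7Aux.mem_Pfin.2 ⟨rfl, hv⟩))
        exact List.isChain_cons.2 ⟨hh, hc⟩
  have hnk : ∀ k, nk A.lang k ≤ (Stmt7Aux.Pfin A k A.start).card := by
    intro k
    have hsub : {g ∈ A.lang | glen g = k} ⊆
        (fun w => FreeGroup.mk w) '' ↑(Stmt7Aux.Pfin A k A.start) := by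
      rintro g ⟨⟨w, hw, rfl⟩, hlen⟩
      have hsome : (A.evalFrom A.start w).isSome := by
        rw [hw]; rfl
      have hredw : (FreeGroup.mk w).toWord = w := by
        rw [FreeGroup.toWord_mk, Stmt7Aux.reduce_eq_self (hchain w hsome)]
      have hlw : w.length = k := by
        rw [← hlen]
        unfold glen
        rw [hredw]
      exact ⟨w, Finset.mem_coe.2 (Stmt7Aux.mem_Pfin.2 ⟨hlw, hsome⟩), rfl⟩
    calc nk A.lang k
        ≤ ((fun w => FreeGroup.mk w) '' ↑(Stmt7Aux.Pfin A k A.start)).ncard :=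
          Set.ncard_le_ncard hsub ((Stmt7Aux.Pfin A k A.start).finite_toSet.image _)
      _ ≤ (↑(Stmt7Aux.Pfin A k A.start) : Set (List (Fin m × Bool))).ncard :=
          Set.ncard_image_le (Stmt7Aux.Pfin A k A.start).finite_toSet
      _ = (Stmt7Aux.Pfin A k A.start).card := Set.ncard_coe_finset _
  -- analytic part
  have hKN3 : 3 ≤ K ^ N := le_trans hK3 (Nat.le_self_pow (by omega) K)
  have hKRpos : (0 : ℝ) < (K : ℝ) := by exact_mod_cast (by omega : 0 < K)
  set θ : ℝ := ((K : ℝ) ^ N - 1) / (K : ℝ) ^ N with hθdef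
  have hKNpos : (0 : ℝ) < (K : ℝ) ^ N := by positivity
  have hKN1R : (2 : ℝ) ≤ (K : ℝ) ^ N - 1 := by
    have h3 : (3 : ℝ) ≤ (K : ℝ) ^ N := by exact_mod_cast hKN3
    linarith
  have hθpos : 0 < θ := by
    rw [hθdef]
    apply div_pos (by linarith) hKNpos
  have hθlt1 : θ < 1 := by
    rw [hθdef, div_lt_one hKNpos]
    linarith
  set δ0 : ℝ := θ ^ (((2 * N : ℕ) : ℝ))⁻¹ with hδ0def
  have hδ0pos : 0 < δ0 := Real.rpow_pos_of_pos hθpos _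
  have hδ0lt1 : δ0 < 1 := by
    rw [hδ0def]
    apply Real.rpow_lt_one hθpos.le hθlt1
    have : (0 : ℝ) < ((2 * N : ℕ) : ℝ) := by exact_mod_cast (by omega : 0 < 2 * N)
    positivity
  have h2N : ((2 * N : ℕ) : ℝ) ≠ 0 := by
    exact_mod_cast (by omega : 2 * N ≠ 0)
  have hδ0pow : δ0 ^ (2 * N) = θ := by
    rw [hδ0def, ← Real.rpow_natCast (θ ^ (((2 * N : ℕ) : ℝ))⁻¹) (2 * N),
      ← Real.rpow_mul hθpos.le, inv_mul_cancel₀ h2N, Real.rpow_one]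
  set δ : ℝ := (δ0 + 1) / 2 with hδdef
  refine ⟨δ, by rw [hδdef]; linarith, by rw [hδdef]; linarith, ?_⟩
  rw [Filter.eventually_atTop]
  refine ⟨2 * N + 1, fun k hk => ?_⟩
  set q : ℕ := (k - 1) / N with hqdef
  set j : ℕ := (k - 1) % N with hjdef
  have hq' : N * q + j = k - 1 := Nat.div_add_mod (k - 1) N
  have hjlt : j < N := Nat.mod_lt _ (by omega)
  -- the ℕ bound
  have hnkb : nk A.lang k ≤ 2 * m * ((K ^ N - 1) ^ q * K ^ j) := by
    have h1 := hnk k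
    have h2 := hstart (k - 1)
    rw [show k - 1 + 1 = k by omega] at h2
    rw [← hqdef, ← hjdef] at h2
    exact le_trans h1 h2
  have hnkbR : (nk A.lang k : ℝ) ≤ 2 * (m : ℝ) * ((K : ℝ) ^ N - 1) ^ q * (K : ℝ) ^ j := by
    have hc : ((2 * m * ((K ^ N - 1) ^ q * K ^ j) : ℕ) : ℝ)
        = 2 * (m : ℝ) * ((K : ℝ) ^ N - 1) ^ q * (K : ℝ) ^ j := by
      push_cast [Nat.cast_sub (by omega : 1 ≤ K ^ N)]
      ring
    rw [← hc]
    exact_mod_cast hnkb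
  have hkpos : 1 ≤ k := by omega
  have hsc : sphereCard m k = 2 * (m : ℝ) * (K : ℝ) ^ (k - 1) := by
    rw [sphereCard, if_neg (by omega : ¬ k = 0)]
    have : (K : ℝ) = 2 * (m : ℝ) - 1 := by
      rw [hKdef, Nat.cast_sub (by omega : 1 ≤ 2 * m)]
      push_cast
      ring
    rw [this]
  have hscpos : 0 < sphereCard m k := by
    rw [hsc]
    have hm0 : (0:ℝ) < (m : ℝ) := by exact_mod_cast (by omega : 0 < m)
    positivity
  have hpow : ((K : ℝ) ^ N) ^ q * (K : ℝ) ^ j = (K : ℝ) ^ (k - 1) := by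
    rw [← pow_mul, ← pow_add, hq']
  have hid : θ ^ q * (2 * (m : ℝ) * (K : ℝ) ^ (k - 1))
      = 2 * (m : ℝ) * ((K : ℝ) ^ N - 1) ^ q * (K : ℝ) ^ j := by
    rw [← hpow, hθdef, div_pow]
    have hKNq : (((K : ℝ) ^ N) ^ q) ≠ 0 := by positivity
    field_simp
  have hfkθ : fk A.lang k ≤ θ ^ q := by
    rw [fk, div_le_iff₀ hscpos, hsc, hid]
    exact hnkbR
  have hθq : θ ^ q ≤ δ0 ^ k := by
    rw [← hδ0pow, ← pow_mul]
    apply pow_le_pow_of_le_one hδ0pos.le hδ0lt1.le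
    obtain ⟨P, hP⟩ : ∃ P, N * q = P := ⟨_, rfl⟩
    rw [hP] at hq'
    rw [mul_assoc, hP]
    omega
  have hlt : δ0 ^ k < δ ^ k :=
    pow_lt_pow_left₀ (by rw [hδdef]; linarith) hδ0pos.le (by omega)
  calc fk A.lang k ≤ θ ^ q := hfkθ
    _ ≤ δ0 ^ k := hθq
    _ < δ ^ k := hlt
end
end

section
/- Let F be the free group of rank m ≥ 2 and let x ∈ Σ. Then C[x] ∖ C(x^{-1},x) = {x} ∪ ⋃_{y ∈ Σ, y ≠ x^{-1}} C(y,x), the union being pairwise disjoint. Moreover, the set M = {1} ∪ (C[x] ∖ C(x^{-1},x)) is a submonoid of F with |uv| = |u| + |v| for all u, v ∈ M, and M is a thick monoid (M = L(A) for some Σ-complete special monoid automaton A). -/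
open Filter Set

noncomputable section

namespace Stmt8Aux

open FreeGroup List

abbrev Ltr (m : ℕ) := Fin m × Bool

def bar {m : ℕ} (a : Ltr m) : Ltr m := (a.1, !a.2)

@[simp] lemma bar_bar {m : ℕ} (a : Ltr m) : bar (bar a) = a := by simp [bar]

lemma ne_bar_self {m : ℕ} (a : Ltr m) : a ≠ bar a := by
  simp [bar, Prod.ext_iff]

lemma ne_bar_comm {m : ℕ} {a b : Ltr m} (h : a ≠ bar b) : b ≠ bar a := by
  intro hb; exact h (by rw [hb, bar_bar])

def Red {m : ℕ} (w : List (Ltr m)) : Prop := List.Chain' (fun p q => p ≠ bar q) w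

lemma red_cons {m : ℕ} {p q : Ltr m} {w : List (Ltr m)} :
    Red (p :: q :: w) ↔ p ≠ bar q ∧ Red (q :: w) := List.isChain_cons_cons

lemma red_cons' {m : ℕ} {p : Ltr m} {w : List (Ltr m)} :
    Red (p :: w) ↔ (∀ q ∈ w.head?, p ≠ bar q) ∧ Red w := List.isChain_cons

lemma red_nil {m : ℕ} : Red ([] : List (Ltr m)) := List.isChain_nil

lemma red_singleton {m : ℕ} (a : Ltr m) : Red [a] := List.isChain_singleton a

lemma reduce_of_red {m : ℕ} {w : List (Ltr m)} (h : Red w) : reduce w = w := by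
  induction w with
  | nil => rfl
  | cons c t ih =>
    rw [reduce.cons]
    have ht : Red t := h.tail
    rw [ih ht]
    cases t with
    | nil => rfl
    | cons d t' =>
      have hcd : c ≠ bar d := (List.isChain_cons_cons.mp h).1
      have : ¬(c.1 = d.1 ∧ c.2 = !d.2) := by
        intro hc; exact hcd (Prod.ext hc.1 hc.2)
      simp [this]

lemma red_reduce {m : ℕ} (w : List (Ltr m)) : Red (reduce w) := by
  induction w with
  | nil => exact red_nil
  | cons c t ih =>
    rw [reduce.cons]
    cases ht : reduce t with
    | nil => exact red_singleton c
    | cons d t' =>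
      rw [ht] at ih
      by_cases hc : c.1 = d.1 ∧ c.2 = !d.2
      · simp only [hc, if_true]
        exact ih.tail
      · simp only [hc, if_false]
        refine List.isChain_cons_cons.mpr ⟨?_, ih⟩
        intro he; rw [he] at hc; exact hc ⟨rfl, rfl⟩

lemma red_toWord {m : ℕ} (g : FG m) : Red (toWord g) := by
  rw [← reduce_toWord]; exact red_reduce _

lemma reduce_eq_of_length {m : ℕ} {w : List (Ltr m)}
    (h : (reduce w).length = w.length) : reduce w = w := by
  induction w with
  | nil => rfl
  | cons c t ih =>
    have hle : (reduce t).length ≤ t.length := by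
      have := FreeGroup.norm_mk_le (L₁ := t)
      simpa [FreeGroup.norm, FreeGroup.toWord_mk] using this
    rw [reduce.cons] at h ⊢
    cases ht : reduce t with
    | nil =>
      rw [ht] at h
      have : t = [] := by simp at h; exact h
      subst this; rfl
    | cons d t' =>
      rw [ht] at h hle
      by_cases hc : c.1 = d.1 ∧ c.2 = !d.2
      · simp only [hc, if_true] at h
        simp at h hle; omega
      · simp only [hc, if_false] at h ⊢
        simp at h
        have : reduce t = t := ih (by rw [ht]; simp; omega)
        rw [ht] at this; rw [this]


lemma toWord_mk_red {m : ℕ} {w : List (Ltr m)} (h : Red w) :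
    toWord (mk w) = w := by rw [FreeGroup.toWord_mk, reduce_of_red h]

lemma glen_mk_red {m : ℕ} {w : List (Ltr m)} (h : Red w) :
    glen (mk w) = w.length := by rw [glen, toWord_mk_red h]

lemma red_append {m : ℕ} {w₁ w₂ : List (Ltr m)} (h₁ : Red w₁) (h₂ : Red w₂)
    (hj : ∀ p ∈ w₁.getLast?, ∀ q ∈ w₂.head?, p ≠ bar q) : Red (w₁ ++ w₂) :=
  List.isChain_append.mpr ⟨h₁, h₂, hj⟩

/-- If lengths add, the reduced word of the product is the concatenation. -/
lemma toWord_mul_eq {m : ℕ} {g h : FG m} (hlen : glen (g * h) = glen g + glen h) :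
    toWord (g * h) = toWord g ++ toWord h := by
  have hm : g * h = mk (toWord g ++ toWord h) := by
    rw [← FreeGroup.mul_mk, FreeGroup.mk_toWord, FreeGroup.mk_toWord]
  have hlw : (toWord (g * h)).length = (toWord g ++ toWord h).length := by
    rw [List.length_append]; exact hlen
  rw [hm, FreeGroup.toWord_mk] at hlw ⊢
  exact reduce_eq_of_length hlw

/-- Conversely, if the concatenation is reduced then lengths add. -/
lemma glen_mul_of_red {m : ℕ} {g h : FG m} (hr : Red (toWord g ++ toWord h)) :
    toWord (g * h) = toWord g ++ toWord h ∧ glen (g * h) = glen g + glen h := by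
  have hm : g * h = mk (toWord g ++ toWord h) := by
    rw [← FreeGroup.mul_mk, FreeGroup.mk_toWord, FreeGroup.mk_toWord]
  constructor
  · rw [hm, FreeGroup.toWord_mk, reduce_of_red hr]
  · rw [glen, hm, FreeGroup.toWord_mk, reduce_of_red hr, List.length_append]; rfl

lemma glen_mul_le {m : ℕ} (g h : FG m) : glen (g * h) ≤ glen g + glen h := by
  have := FreeGroup.toWord_mul_sublist g h
  have := this.length_le
  simpa [glen, List.length_append] using this

@[simp] lemma glen_one {m : ℕ} : glen (1 : FG m) = 0 := by simp [glen]

lemma glen_eq_one {m : ℕ} {x : FG m} (hx : glen x = 1) :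
    ∃ a : Ltr m, toWord x = [a] := List.length_eq_one_iff.mp hx


lemma glen_letter {m : ℕ} {x : FG m} {a : Ltr m} (hx : toWord x = [a]) : glen x = 1 := by
  rw [glen, hx]; rfl

lemma mk_letter {m : ℕ} {x : FG m} {a : Ltr m} (hx : toWord x = [a]) : x = mk [a] := by
  rw [← FreeGroup.mk_toWord (x := x), hx]

lemma toWord_inv_letter {m : ℕ} {x : FG m} {a : Ltr m} (hx : toWord x = [a]) :
    toWord x⁻¹ = [bar a] := by
  rw [FreeGroup.toWord_inv, hx]; rfl

lemma mem_coneR {m : ℕ} {x : FG m} {a : Ltr m} (hx : toWord x = [a]) {g : FG m} :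
    g ∈ coneR x ↔ ∃ w, toWord g = w ++ [a] := by
  constructor
  · rintro ⟨f, rfl, hlen⟩
    exact ⟨toWord f, by rw [toWord_mul_eq hlen, hx]⟩
  · rintro ⟨w, hw⟩
    have hred : Red (w ++ [a]) := hw ▸ red_toWord g
    have hrw : Red w := hred.prefix ⟨[a], rfl⟩
    refine ⟨mk w, ?_, ?_⟩
    · rw [mk_letter hx, FreeGroup.mul_mk, ← hw, FreeGroup.mk_toWord]
    · rw [glen, hw, List.length_append, glen_mk_red hrw, glen_letter hx]; rfl

lemma mem_dcone {m : ℕ} {x y : FG m} {a b : Ltr m} (hx : toWord x = [a])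
    (hy : toWord y = [b]) {g : FG m} :
    g ∈ dcone y x ↔ ∃ w, toWord g = b :: (w ++ [a]) := by
  constructor
  · rintro ⟨f, rfl, hlen⟩
    have hx1 : glen x = 1 := glen_letter hx
    have hy1 : glen y = 1 := glen_letter hy
    have t1 := glen_mul_le (y * f) x
    have t2 := glen_mul_le y f
    have h1 : glen (y * f) = glen y + glen f := by omega
    have h2 : glen (y * f * x) = glen (y * f) + glen x := by omega
    refine ⟨toWord f, ?_⟩
    rw [toWord_mul_eq h2, toWord_mul_eq h1, hx, hy]
    simp
  · rintro ⟨w, hw⟩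
    have hred : Red (b :: (w ++ [a])) := hw ▸ red_toWord g
    have hrw : Red w := hred.infix ⟨[b], [a], by simp⟩
    refine ⟨mk w, ?_, ?_⟩
    · rw [mk_letter hx, mk_letter hy, FreeGroup.mul_mk, FreeGroup.mul_mk]
      rw [← FreeGroup.mk_toWord (x := g), hw]
      simp
    · rw [glen, hw, glen_mk_red hrw, glen_letter hx, glen_letter hy]
      simp; omega

lemma mem_S {m : ℕ} {x : FG m} {a : Ltr m} (hx : toWord x = [a]) {g : FG m} :
    g ∈ coneR x \ dcone x⁻¹ x ↔
      (∃ w, toWord g = w ++ [a]) ∧ (toWord g).head? ≠ some (bar a) := by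
  have hxi := toWord_inv_letter hx
  simp only [Set.mem_diff, mem_coneR hx, mem_dcone hx hxi]
  constructor
  · rintro ⟨⟨w, hw⟩, hnd⟩
    refine ⟨⟨w, hw⟩, ?_⟩
    intro hh
    cases w with
    | nil =>
      rw [hw] at hh; simp at hh
      exact ne_bar_self a hh
    | cons c w' =>
      rw [hw] at hh; simp at hh
      exact hnd ⟨w', by rw [hw, hh]; rfl⟩
  · rintro ⟨⟨w, hw⟩, hh⟩
    refine ⟨⟨w, hw⟩, ?_⟩
    rintro ⟨w', hw'⟩
    exact hh (by rw [hw']; rfl)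


def enc (m : ℕ) : Ltr m ≃ Fin (Fintype.card (Ltr m)) := Fintype.equivFin _

def aut (m : ℕ) (a : Ltr m) : PAut m where
  n := Fintype.card (Ltr m)
  step s c := if c = bar ((enc m).symm s) then none else some (enc m c)
  start := enc m a
  accept := enc m a

lemma aut_step (m : ℕ) (a d c : Ltr m) :
    (aut m a).step (enc m d) c = if c = bar d then none else some (enc m c) := by
  simp [aut]

lemma evalFrom_cons_none {A : PAut m} {s : Fin A.n} {c : Ltr m} {w : List (Ltr m)}
    (h : A.step s c = none) : A.evalFrom s (c :: w) = none := by
  simp [PAut.evalFrom, h]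

lemma evalFrom_cons_some {A : PAut m} {s s' : Fin A.n} {c : Ltr m} {w : List (Ltr m)}
    (h : A.step s c = some s') : A.evalFrom s (c :: w) = A.evalFrom s' w := by
  simp [PAut.evalFrom, h]

instance {m : ℕ} (w : List (Ltr m)) : Decidable (Red w) :=
  inferInstanceAs (Decidable (List.IsChain (fun p q => p ≠ bar q) w))

lemma eval_aut (m : ℕ) (a : Ltr m) (d : Ltr m) (w : List (Ltr m)) :
    (aut m a).evalFrom (enc m d) w =
      if Red (d :: w) then some (enc m (w.getLastD d)) else none := by
  induction w generalizing d with
  | nil => simp [PAut.evalFrom, Red, List.Chain', List.isChain_singleton]; rfl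
  | cons c w ih =>
    by_cases hc : c = bar d
    · rw [evalFrom_cons_none (A := aut m a) (s := enc m d) (by rw [aut_step, if_pos hc]; rfl)]
      have hnred : ¬ Red (d :: c :: w) := by
        intro h
        exact (List.isChain_cons_cons.mp h).1 (by rw [hc, bar_bar])
      rw [if_neg hnred]; rfl
    · rw [evalFrom_cons_some (A := aut m a) (s := enc m d) (s' := enc m c) (by rw [aut_step, if_neg hc]; rfl), ih c, List.getLastD_cons]
      have hrel : d ≠ bar c := ne_bar_comm hc
      by_cases hr : Red (c :: w)
      · rw [if_pos hr, if_pos (red_cons.mpr ⟨hrel, hr⟩)]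
      · rw [if_neg hr, if_neg (fun h => hr (red_cons.mp h).2)]

lemma mem_words_aut (m : ℕ) (a : Ltr m) (w : List (Ltr m)) :
    w ∈ (aut m a).words ↔ Red (a :: w) ∧ w.getLastD a = a := by
  show (aut m a).evalFrom (enc m a) w = some (enc m a) ↔ _
  rw [eval_aut]
  by_cases hr : Red (a :: w)
  · rw [if_pos hr]
    exact ⟨fun h => ⟨hr, (enc m).injective (Option.some.inj h)⟩, fun h => congrArg (fun t => some (enc m t)) h.2⟩
  · rw [if_neg hr]
    simp [hr]

lemma one_eq_mk_nil {m : ℕ} : (1 : FG m) = mk [] := by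
  rw [← FreeGroup.mk_toWord (x := (1 : FG m)), FreeGroup.toWord_one]

lemma lang_aut {m : ℕ} {x : FG m} {a : Ltr m} (hx : toWord x = [a]) :
    (aut m a).lang = insert 1 (coneR x \ dcone x⁻¹ x) := by
  ext g
  simp only [PAut.lang, Set.mem_image, mem_words_aut, Set.mem_insert_iff]
  rw [mem_S hx]
  constructor
  · rintro ⟨w, ⟨hred, hlast⟩, rfl⟩
    cases w with
    | nil => left; exact one_eq_mk_nil.symm
    | cons c w' =>
      right
      have hredw : Red (c :: w') := hred.tail
      have htw : toWord (mk (c :: w')) = c :: w' := toWord_mk_red hredw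
      constructor
      · refine ⟨(c :: w').dropLast, ?_⟩
        rw [htw]
        have hne : (c :: w') ≠ [] := by simp
        have hlg : (c :: w').getLast hne = a := by
          rw [List.getLast_eq_getLastD, ← List.getLastD_cons (a := a) (b := c) (l := w'), hlast]
        rw [← hlg]
        exact (List.dropLast_append_getLast hne).symm
      · rw [htw]
        have hca : a ≠ bar c := (List.isChain_cons_cons.mp hred).1
        simpa using ne_bar_comm hca
  · rintro (rfl | ⟨⟨w, hw⟩, hh⟩)
    · exact ⟨[], ⟨red_singleton a, rfl⟩, one_eq_mk_nil.symm⟩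
    · refine ⟨toWord g, ⟨?_, ?_⟩, FreeGroup.mk_toWord⟩
      · refine red_cons'.mpr ⟨?_, red_toWord g⟩
        intro q hq
        have hq' : q ≠ bar a := by
          intro hqe; apply hh; rw [← hqe]; exact hq
        exact ne_bar_comm hq'
      · rw [hw, List.getLastD_concat]

lemma aut_special (m : ℕ) (hm : 2 ≤ m) (a : Ltr m) :
    (aut m a).IsSpecialMonoidAut ∧ (aut m a).SigmaComplete := by
  have : Nontrivial (Fin m) := Fin.nontrivial_iff_two_le.mpr hm
  obtain ⟨j, hj⟩ := exists_ne a.1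
  set b : Ltr m := (j, true) with hbdef
  have hab : ∀ bl : Bool, a ≠ (j, bl) := fun bl h => hj (by rw [h])
  have hba : ∀ bl : Bool, b ≠ (a.1, bl) := fun bl h => hj (congrArg Prod.fst h)
  constructor
  · refine ⟨rfl, ?_, ?_, ?_, ?_⟩
    · -- reachability from start
      intro s
      obtain ⟨d, rfl⟩ : ∃ d, enc m d = s := ⟨(enc m).symm s, (enc m).apply_symm_apply s⟩
      rw [show (aut m a).start = enc m a from rfl]
      by_cases hda : d = a
      · exact ⟨[], by rw [hda, eval_aut, if_pos (red_singleton a)]; rfl⟩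
      · by_cases hdb : d = bar a
        · refine ⟨[b, d], ?_⟩
          rw [eval_aut, if_pos ?_]
          · rfl
          · refine red_cons.mpr ⟨?_, red_cons.mpr ⟨?_, red_singleton d⟩⟩
            · exact hab (!true)
            · rw [hdb, bar_bar]; exact hba a.2
        · refine ⟨[d], ?_⟩
          rw [eval_aut, if_pos ?_]
          · rfl
          · exact red_cons.mpr ⟨ne_bar_comm hdb, red_singleton d⟩
    · -- reach accept from anywhere
      intro s
      obtain ⟨d, rfl⟩ : ∃ d, enc m d = s := ⟨(enc m).symm s, (enc m).apply_symm_apply s⟩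
      rw [show (aut m a).accept = enc m a from rfl]
      by_cases hdb : d = bar a
      · refine ⟨[b, a], ?_⟩
        rw [eval_aut, if_pos ?_]
        · rfl
        · refine red_cons.mpr ⟨?_, red_cons.mpr ⟨?_, red_singleton a⟩⟩
          · subst hdb; exact fun h => hj (congrArg Prod.fst h).symm
          · exact hba (!a.2)
      · refine ⟨[a], ?_⟩
        rw [eval_aut, if_pos ?_]
        · rfl
        · exact red_cons.mpr ⟨hdb, red_singleton a⟩
    · -- unique entering label
      intro s₁ a₁ s₂ a₂ s h₁ h₂
      simp only [aut] at h₁ h₂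
      split_ifs at h₁ h₂
      have e₁ : enc m a₁ = s := by injection h₁
      have e₂ : enc m a₂ = s := by injection h₂
      exact (enc m).injective (e₁.trans e₂.symm)
    · -- no inverse out
      intro s' c s h
      simp only [aut] at h ⊢
      split_ifs at h with hc
      have e : enc m c = s := by injection h
      rw [if_pos ?_]
      rw [← e, Equiv.symm_apply_apply]
      rfl
  · -- SigmaComplete
    intro s
    refine ⟨(enc m).symm s, ⟨s, ?_⟩, ?_⟩
    · simp only [aut]
      rw [if_neg (ne_bar_self _)]
      exact congrArg some ((enc m).apply_symm_apply s)
    · intro c hc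
      simp only [aut]
      rw [if_neg (show ¬ c = bar ((enc m).symm s) from hc)]
      rfl

end Stmt8Aux

open Stmt8Aux FreeGroup in
/-- for a letter `x`, `C[x] ∖ C(x⁻¹,x)` is the disjoint union of `{x}`
and the double-based cones `C(y,x)` over letters `y ≠ x⁻¹`; moreover
`M = {1} ∪ (C[x] ∖ C(x⁻¹,x))` is a submonoid with additive lengths and a thick monoid. -/
theorem stmt8 {m : ℕ} (hm : 2 ≤ m) (x : FG m) (hx : glen x = 1) :
    (coneR x \ dcone x⁻¹ x
      = {x} ∪ ⋃ y ∈ {y : FG m | glen y = 1 ∧ y ≠ x⁻¹}, dcone y x) ∧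
    (∀ y : FG m, glen y = 1 → y ≠ x⁻¹ → x ∉ dcone y x) ∧
    (∀ y y' : FG m, glen y = 1 → y ≠ x⁻¹ → glen y' = 1 → y' ≠ x⁻¹ → y ≠ y' →
      Disjoint (dcone y x) (dcone y' x)) ∧
    (∀ u ∈ insert (1 : FG m) (coneR x \ dcone x⁻¹ x),
      ∀ v ∈ insert (1 : FG m) (coneR x \ dcone x⁻¹ x),
        u * v ∈ insert (1 : FG m) (coneR x \ dcone x⁻¹ x) ∧
        glen (u * v) = glen u + glen v) ∧
    IsThickMonoid (insert (1 : FG m) (coneR x \ dcone x⁻¹ x)) := by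
  obtain ⟨a, ha⟩ := glen_eq_one hx
  refine ⟨?_, ?_, ?_, ?_, ?_⟩
  · ext g
    simp only [Set.mem_union, Set.mem_singleton_iff, Set.mem_iUnion, Set.mem_setOf_eq,
      exists_prop]
    rw [mem_S ha]
    constructor
    · rintro ⟨⟨w, hw⟩, hh⟩
      cases w with
      | nil =>
        left
        apply FreeGroup.toWord_injective
        rw [hw, ha]; rfl
      | cons c w' =>
        right
        have hc : toWord (mk [c]) = [c] := toWord_mk_red (red_singleton c)
        refine ⟨mk [c], ⟨glen_letter hc, ?_⟩, (mem_dcone ha hc).mpr ⟨w', by rw [hw]; rfl⟩⟩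
        intro hceq
        apply hh
        rw [hw]
        have hcb : c = bar a := by
          have h2 := congrArg toWord hceq
          rw [hc, toWord_inv_letter ha] at h2
          simpa using h2
        rw [hcb]; rfl
    · rintro (rfl | ⟨y, ⟨hy1, hyne⟩, hgd⟩)
      · refine ⟨⟨[], by rw [ha]; rfl⟩, ?_⟩
        rw [ha]
        simp only [List.head?_cons, ne_eq, Option.some.injEq]
        exact ne_bar_self a
      · obtain ⟨b, hb⟩ := glen_eq_one hy1
        obtain ⟨w, hw⟩ := (mem_dcone ha hb).mp hgd
        refine ⟨⟨b :: w, by rw [hw]; rfl⟩, ?_⟩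
        rw [hw]
        simp only [List.head?_cons, ne_eq, Option.some.injEq]
        intro hba
        apply hyne
        apply FreeGroup.toWord_injective
        rw [hb, toWord_inv_letter ha, hba]
  · intro y hy1 hyne hmem
    obtain ⟨b, hb⟩ := glen_eq_one hy1
    obtain ⟨w, hw⟩ := (mem_dcone ha hb).mp hmem
    rw [ha] at hw
    have := congrArg List.length hw
    simp at this
  · intro y y' hy1 _ hy1' _ hne
    obtain ⟨b, hb⟩ := glen_eq_one hy1
    obtain ⟨b', hb'⟩ := glen_eq_one hy1'
    rw [Set.disjoint_left]
    intro g hg hg'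
    obtain ⟨w, hw⟩ := (mem_dcone ha hb).mp hg
    obtain ⟨w', hw'⟩ := (mem_dcone ha hb').mp hg'
    rw [hw] at hw'
    have hbb : b = b' := by injection hw'
    apply hne
    rw [mk_letter hb, mk_letter hb', hbb]
  · intro u hu v hv
    rcases Set.mem_insert_iff.mp hu with rfl | huS
    · exact ⟨by rw [one_mul]; exact hv, by rw [one_mul, glen_one, zero_add]⟩
    · rcases Set.mem_insert_iff.mp hv with rfl | hvS
      · exact ⟨by rw [mul_one]; exact hu, by rw [mul_one, glen_one, add_zero]⟩
      · obtain ⟨⟨w1, h1⟩, hh1⟩ := (mem_S ha).mp huS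
        obtain ⟨⟨w2, h2⟩, hh2⟩ := (mem_S ha).mp hvS
        have hred : Red (toWord u ++ toWord v) := by
          refine red_append (red_toWord u) (red_toWord v) ?_
          intro p hp q hq
          rw [h1, List.getLast?_concat] at hp
          rw [Option.mem_some_iff] at hp
          subst hp
          rw [Option.mem_def] at hq
          have hq' : q ≠ bar a := fun hqe => hh2 (by rw [hq, hqe])
          exact ne_bar_comm hq'
        obtain ⟨htw, hgl⟩ := glen_mul_of_red hred
        refine ⟨Set.mem_insert_iff.mpr (Or.inr ((mem_S ha).mpr ⟨⟨toWord u ++ w2, ?_⟩, ?_⟩)), hgl⟩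
        · rw [htw, h2, List.append_assoc]
        · rw [htw, List.head?_append_of_ne_nil _ (by rw [h1]; simp)]
          exact hh1
  · obtain ⟨hspec, hcomp⟩ := aut_special m hm a
    exact ⟨aut m a, hspec, hcomp, (lang_aut ha).symm⟩
end
end
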